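/- arXiv:1904.09415 — 8 statements merged into one kernel-verified Lean document; each statement's English description precedes it below -/
import Mathlib

section
/- Let (Ω, 𝓕, P) be a probability space and let Z, Z̃ : Ω → EuclideanSpace ℝ (Fin d) be random vectors in L² (MemLp 2) with means μ₁ = E[Z] and μ₂ = E[Z̃]. Assume E[‖Z − μ₁‖²] = E[‖Z̃ − μ₂‖²] = T and E[⟪Z − μ₁, Z̃ − μ₂⟫] ≤ T. Then ‖μ₁ − μ₂‖² ≤ E[‖Z − Z̃‖²]. Consequently, if in addition (1/2) · E[‖Z − Z̃‖²] ≤ b for some b ≥ 0, then (1/2) · ‖μ₁ − μ₂‖² ≤ b. -/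
open MeasureTheory
open scoped RealInnerProductSpace

private lemma integrable_inner_of_mem2 {Ω : Type*} [MeasureSpace Ω]
    {E : Type*} [NormedAddCommGroup E] [InnerProductSpace ℝ E]
    {f g : Ω → E} (hf : MemLp f 2) (hg : MemLp g 2) :
    Integrable (fun ω => ⟪f ω, g ω⟫) := by
  have h := L2.integrable_inner (𝕜 := ℝ) (hf.toLp f) (hg.toLp g)
  refine h.congr ?_
  filter_upwards [hf.coeFn_toLp, hg.coeFn_toLp] with ω h1 h2
  rw [h1, h2]

/-- If the cross-covariance trace does not exceed the common covariance trace `T`, then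
`‖μ₁ − μ₂‖² ≤ E‖Z − Z̃‖²`; consequently the norm-ball constraint `(1/2)E‖Z − Z̃‖² ≤ b`
implies the mean constraint `(1/2)‖μ₁ − μ₂‖² ≤ b`. -/
theorem sq_dist_means_le_expected_sq_dist {Ω : Type*} [MeasureSpace Ω]
    [IsProbabilityMeasure (volume : Measure Ω)] {d : ℕ}
    (Z Zt : Ω → EuclideanSpace ℝ (Fin d)) (hZ : MemLp Z 2) (hZt : MemLp Zt 2)
    (μ₁ μ₂ : EuclideanSpace ℝ (Fin d)) (hμ₁ : μ₁ = ∫ ω, Z ω) (hμ₂ : μ₂ = ∫ ω, Zt ω)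
    (T : ℝ) (hT₁ : (∫ ω, ‖Z ω - μ₁‖ ^ 2) = T) (hT₂ : (∫ ω, ‖Zt ω - μ₂‖ ^ 2) = T)
    (hζ : (∫ ω, ⟪Z ω - μ₁, Zt ω - μ₂⟫) ≤ T) :
    ‖μ₁ - μ₂‖ ^ 2 ≤ (∫ ω, ‖Z ω - Zt ω‖ ^ 2) ∧
      ∀ b : ℝ, 0 ≤ b → (1 / 2) * (∫ ω, ‖Z ω - Zt ω‖ ^ 2) ≤ b →
        (1 / 2) * ‖μ₁ - μ₂‖ ^ 2 ≤ b := by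
  -- centered variables
  set A : Ω → EuclideanSpace ℝ (Fin d) := fun ω => Z ω - μ₁ with hA
  set B : Ω → EuclideanSpace ℝ (Fin d) := fun ω => Zt ω - μ₂ with hB
  set m : EuclideanSpace ℝ (Fin d) := μ₁ - μ₂ with hm
  have hAmem : MemLp A 2 := hZ.sub (memLp_const μ₁)
  have hBmem : MemLp B 2 := hZt.sub (memLp_const μ₂)
  have hABmem : MemLp (fun ω => A ω - B ω) 2 := hAmem.sub hBmem
  -- integrabilities
  have hiAA : Integrable (fun ω => ⟪A ω, A ω⟫) := integrable_inner_of_mem2 hAmem hAmem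
  have hiBB : Integrable (fun ω => ⟪B ω, B ω⟫) := integrable_inner_of_mem2 hBmem hBmem
  have hiAB : Integrable (fun ω => ⟪A ω, B ω⟫) := integrable_inner_of_mem2 hAmem hBmem
  have hiA : Integrable A := hAmem.integrable one_le_two
  have hiB : Integrable B := hBmem.integrable one_le_two
  have hiABsub : Integrable (fun ω => A ω - B ω) := hiA.sub hiB
  have hiABm : Integrable (fun ω => ⟪m, A ω - B ω⟫) := hiABsub.const_inner m
  -- mean of A and B is zero
  have hiZ : Integrable Z := hZ.integrable one_le_two
  have hiZt : Integrable Zt := hZt.integrable one_le_two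
  have hEA : (∫ ω, A ω) = 0 := by
    rw [hA]
    rw [integral_sub hiZ (integrable_const μ₁), integral_const]
    simp [hμ₁]
  have hEB : (∫ ω, B ω) = 0 := by
    rw [hB]
    rw [integral_sub hiZt (integrable_const μ₂), integral_const]
    simp [hμ₂]
  -- pointwise expansion
  have hpt : ∀ ω, ‖Z ω - Zt ω‖ ^ 2
      = (⟪A ω, A ω⟫ + ⟪B ω, B ω⟫ - 2 * ⟪A ω, B ω⟫) + 2 * ⟪m, A ω - B ω⟫ + ‖m‖ ^ 2 := by
    intro ω
    have h1 : Z ω - Zt ω = (A ω - B ω) + m := by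
      simp only [hA, hB, hm]
      abel
    rw [h1, @norm_add_sq_real, @norm_sub_sq_real, real_inner_self_eq_norm_sq,
      real_inner_self_eq_norm_sq, real_inner_comm, real_inner_comm (A ω - B ω) m]
    ring
  -- integral identity
  have hI3 : Integrable (fun ω => ⟪A ω, A ω⟫ + ⟪B ω, B ω⟫) := hiAA.add hiBB
  have hI2 : Integrable (fun ω => ⟪A ω, A ω⟫ + ⟪B ω, B ω⟫ - 2 * ⟪A ω, B ω⟫) :=
    hI3.sub (hiAB.const_mul 2)
  have hI1 : Integrable
      (fun ω => ⟪A ω, A ω⟫ + ⟪B ω, B ω⟫ - 2 * ⟪A ω, B ω⟫ + 2 * ⟪m, A ω - B ω⟫) :=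
    hI2.add (hiABm.const_mul 2)
  have hstep : (∫ ω, ‖Z ω - Zt ω‖ ^ 2)
      = ((∫ ω, ⟪A ω, A ω⟫) + (∫ ω, ⟪B ω, B ω⟫) - 2 * (∫ ω, ⟪A ω, B ω⟫))
        + 2 * (∫ ω, ⟪m, A ω - B ω⟫) + ‖m‖ ^ 2 := by
    calc (∫ ω, ‖Z ω - Zt ω‖ ^ 2)
        = ∫ ω, ((⟪A ω, A ω⟫ + ⟪B ω, B ω⟫ - 2 * ⟪A ω, B ω⟫) + 2 * ⟪m, A ω - B ω⟫ + ‖m‖ ^ 2) := by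
          exact integral_congr_ae (Filter.Eventually.of_forall hpt)
      _ = ((∫ ω, ⟪A ω, A ω⟫) + (∫ ω, ⟪B ω, B ω⟫) - 2 * (∫ ω, ⟪A ω, B ω⟫))
            + 2 * (∫ ω, ⟪m, A ω - B ω⟫) + ‖m‖ ^ 2 := by
          rw [integral_add hI1 (integrable_const _), integral_add hI2 (hiABm.const_mul 2),
              integral_sub hI3 (hiAB.const_mul 2), integral_add hiAA hiBB,
              integral_const_mul, integral_const_mul, integral_const]
          simp
  -- the cross term vanishes
  have hcross : (∫ ω, ⟪m, A ω - B ω⟫) = 0 := by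
    rw [integral_inner hiABsub m, integral_sub hiA hiB, hEA, hEB]
    simp
  -- the self terms
  have hAA : (∫ ω, ⟪A ω, A ω⟫) = T := by
    rw [← hT₁]
    exact integral_congr_ae (Filter.Eventually.of_forall fun ω =>
      real_inner_self_eq_norm_sq (A ω))
  have hBB : (∫ ω, ⟪B ω, B ω⟫) = T := by
    rw [← hT₂]
    exact integral_congr_ae (Filter.Eventually.of_forall fun ω =>
      real_inner_self_eq_norm_sq (B ω))
  have hkey : ‖m‖ ^ 2 ≤ (∫ ω, ‖Z ω - Zt ω‖ ^ 2) := by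
    rw [hstep, hAA, hBB, hcross]
    have : (∫ ω, ⟪A ω, B ω⟫) ≤ T := hζ
    nlinarith
  refine ⟨hkey, fun b hb hball => ?_⟩
  calc (1 / 2) * ‖μ₁ - μ₂‖ ^ 2 ≤ (1 / 2) * (∫ ω, ‖Z ω - Zt ω‖ ^ 2) := by linarith
    _ ≤ b := hball
end

section
/- Let (Ω, 𝓕, P) be a probability space and let Z, Z̃ : Ω → EuclideanSpace ℝ (Fin d) be random vectors in L² (MemLp 2) with means μ₁ = E[Z] and μ₂ = E[Z̃]. Assume E[‖Z − μ₁‖²] = E[‖Z̃ − μ₂‖²] = T and E[⟪Z − μ₁, Z̃ − μ₂⟫] ≥ T. Then E[‖Z − Z̃‖²] ≤ ‖μ₁ − μ₂‖². Consequently, if in addition (1/2) · ‖μ₁ − μ₂‖² ≤ b for some b ≥ 0, then (1/2) · E[‖Z − Z̃‖²] ≤ b. -/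
open MeasureTheory
open scoped RealInnerProductSpace

/-- If the cross-covariance trace is at least the common covariance trace `T`, then
`E‖Z − Z̃‖² ≤ ‖μ₁ − μ₂‖²`; consequently the mean (KL-type) constraint `(1/2)‖μ₁ − μ₂‖² ≤ b`
implies the norm-ball constraint `(1/2)E‖Z − Z̃‖² ≤ b`. -/
theorem expected_sq_dist_le_sq_dist_means {Ω : Type*} [MeasureSpace Ω]
    [IsProbabilityMeasure (volume : Measure Ω)] {d : ℕ}
    (Z Zt : Ω → EuclideanSpace ℝ (Fin d)) (hZ : MemLp Z 2) (hZt : MemLp Zt 2)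
    (μ₁ μ₂ : EuclideanSpace ℝ (Fin d)) (hμ₁ : μ₁ = ∫ ω, Z ω) (hμ₂ : μ₂ = ∫ ω, Zt ω)
    (T : ℝ) (hT₁ : (∫ ω, ‖Z ω - μ₁‖ ^ 2) = T) (hT₂ : (∫ ω, ‖Zt ω - μ₂‖ ^ 2) = T)
    (hζ : T ≤ ∫ ω, ⟪Z ω - μ₁, Zt ω - μ₂⟫) :
    (∫ ω, ‖Z ω - Zt ω‖ ^ 2) ≤ ‖μ₁ - μ₂‖ ^ 2 ∧
      ∀ b : ℝ, 0 ≤ b → (1 / 2) * ‖μ₁ - μ₂‖ ^ 2 ≤ b →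
        (1 / 2) * (∫ ω, ‖Z ω - Zt ω‖ ^ 2) ≤ b := by
  set f : Ω → EuclideanSpace ℝ (Fin d) := fun ω => Z ω - μ₁ with hf_def
  set g : Ω → EuclideanSpace ℝ (Fin d) := fun ω => Zt ω - μ₂ with hg_def
  set w : EuclideanSpace ℝ (Fin d) := μ₁ - μ₂ with hw_def
  have hf : MemLp f 2 := hZ.sub (memLp_const μ₁)
  have hg : MemLp g 2 := hZt.sub (memLp_const μ₂)
  -- integrability facts
  have hf2 : Integrable (fun ω => ‖f ω‖ ^ 2) := hf.norm.integrable_sq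
  have hg2 : Integrable (fun ω => ‖g ω‖ ^ 2) := hg.norm.integrable_sq
  have hinner : Integrable (fun ω => ⟪f ω, g ω⟫) := by
    refine Integrable.mono' ((hf2.add hg2).div_const 2)
      (hf.aestronglyMeasurable.inner hg.aestronglyMeasurable) ?_
    filter_upwards with ω
    have h1 : |⟪f ω, g ω⟫| ≤ ‖f ω‖ * ‖g ω‖ := abs_real_inner_le_norm _ _
    have h2 : ‖f ω‖ * ‖g ω‖ ≤ (‖f ω‖ ^ 2 + ‖g ω‖ ^ 2) / 2 := by nlinarith [sq_nonneg (‖f ω‖ - ‖g ω‖)]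
    simpa [Real.norm_eq_abs] using h1.trans h2
  have hfint : Integrable f := hf.integrable one_le_two
  have hgint : Integrable g := hg.integrable one_le_two
  have hfgint : Integrable (fun ω => f ω - g ω) := by exact hfint.sub hgint
  -- means are zero
  have hEf : (∫ ω, f ω) = 0 := by
    simp only [hf_def]
    rw [integral_sub (hZ.integrable one_le_two) (integrable_const μ₁), integral_const]
    simp [← hμ₁]
  have hEg : (∫ ω, g ω) = 0 := by
    simp only [hg_def]
    rw [integral_sub (hZt.integrable one_le_two) (integrable_const μ₂), integral_const]
    simp [← hμ₂]
  have hEfg : (∫ ω, (f ω - g ω)) = 0 := by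
    rw [integral_sub hfint hgint, hEf, hEg, sub_zero]
  -- cross term with constant w
  have hcross_int : Integrable (fun ω => ⟪f ω - g ω, w⟫) := by
    have h := Integrable.inner_const (𝕜 := ℝ) hfgint w
    simpa using h
  have hcross : (∫ ω, ⟪f ω - g ω, w⟫) = 0 := by
    have h := integral_inner (𝕜 := ℝ) hfgint w
    rw [hEfg, inner_zero_right] at h
    calc (∫ ω, ⟪f ω - g ω, w⟫) = ∫ ω, ⟪w, f ω - g ω⟫ := by
          simp_rw [real_inner_comm]
      _ = 0 := h
  -- pointwise expansion
  have hpt : ∀ ω, ‖Z ω - Zt ω‖ ^ 2 =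
      ‖f ω‖ ^ 2 + ‖g ω‖ ^ 2 - 2 * ⟪f ω, g ω⟫ + (2 * ⟪f ω - g ω, w⟫ + ‖w‖ ^ 2) := by
    intro ω
    have h0 : Z ω - Zt ω = (f ω - g ω) + w := by
      simp only [hf_def, hg_def, hw_def]; abel
    rw [h0, norm_add_sq_real, norm_sub_sq_real]
    ring
  have hI1 : Integrable (fun ω => ‖f ω‖ ^ 2 + ‖g ω‖ ^ 2 - 2 * ⟪f ω, g ω⟫) := by
    exact (hf2.add hg2).sub (hinner.const_mul 2)
  have hI1' : Integrable (fun ω => ‖f ω‖ ^ 2 + ‖g ω‖ ^ 2) := by exact hf2.add hg2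
  have hI2 : Integrable (fun ω => 2 * ⟪f ω - g ω, w⟫ + ‖w‖ ^ 2) := by
    exact (hcross_int.const_mul 2).add (integrable_const _)
  -- integrate
  have hintegral : (∫ ω, ‖Z ω - Zt ω‖ ^ 2) =
      T + T - 2 * (∫ ω, ⟪f ω, g ω⟫) + ‖w‖ ^ 2 := by
    calc (∫ ω, ‖Z ω - Zt ω‖ ^ 2)
        = ∫ ω, (‖f ω‖ ^ 2 + ‖g ω‖ ^ 2 - 2 * ⟪f ω, g ω⟫ + (2 * ⟪f ω - g ω, w⟫ + ‖w‖ ^ 2)) :=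
          integral_congr_ae (Filter.Eventually.of_forall hpt)
      _ = (∫ ω, (‖f ω‖ ^ 2 + ‖g ω‖ ^ 2 - 2 * ⟪f ω, g ω⟫))
            + ∫ ω, (2 * ⟪f ω - g ω, w⟫ + ‖w‖ ^ 2) := integral_add hI1 hI2
      _ = T + T - 2 * (∫ ω, ⟪f ω, g ω⟫) + ‖w‖ ^ 2 := by
          rw [integral_sub hI1' (hinner.const_mul 2), integral_add hf2 hg2,
            integral_add (hcross_int.const_mul 2) (integrable_const _),
            integral_const_mul, integral_const_mul, hcross, integral_const]
          simp only [hf_def, hg_def]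
          rw [hT₁, hT₂]
          simp
  have hI : T ≤ ∫ ω, ⟪f ω, g ω⟫ := hζ
  have main : (∫ ω, ‖Z ω - Zt ω‖ ^ 2) ≤ ‖μ₁ - μ₂‖ ^ 2 := by
    rw [hintegral, hw_def]; linarith
  exact ⟨main, fun b hb hb2 => by linarith⟩
end

section
/- Let d be a positive natural number, let μ₁, μ₂ ∈ EuclideanSpace ℝ (Fin d), and let Σ : Matrix (Fin d) (Fin d) ℝ be a symmetric positive definite matrix. Set s = (1/2) · ⟪μ₁ − μ₂, Σ⁻¹.mulVec (μ₁ − μ₂)⟫. Then the χ²-divergence with generator f(t) = (1/2)(t−1)², namely ∫ N(z; μ₁, Σ) · (1/2) · (N(z; μ₂, Σ)/N(z; μ₁, Σ) − 1)² dz (Lebesgue integral over ℝ^d), equals (1/2) · (Real.exp (2·s) − 1). -/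
open MeasureTheory
open scoped RealInnerProductSpace

/-- The multivariate Gaussian density `N(z; μ, Σ)` on `EuclideanSpace ℝ (Fin d)`. -/
noncomputable def gaussPdf {d : ℕ} (μ : EuclideanSpace ℝ (Fin d)) (S : Matrix (Fin d) (Fin d) ℝ)
    (z : EuclideanSpace ℝ (Fin d)) : ℝ :=
  (2 * Real.pi) ^ (-(d : ℝ) / 2) * S.det ^ (-(1 : ℝ) / 2) *
    Real.exp (-(1 / 2) * ⟪z - μ, (WithLp.toLp 2 ((S⁻¹).mulVec (z - μ)) : EuclideanSpace ℝ (Fin d))⟫)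

namespace ChiSqAux

open Matrix
open scoped MatrixOrder

variable {d : ℕ}

lemma inner_eq_dot (x y : EuclideanSpace ℝ (Fin d)) : ⟪x, y⟫ = x ⬝ᵥ y := by
  simp [PiLp.inner_apply, dotProduct, mul_comm]

lemma dot_symm (A : Matrix (Fin d) (Fin d) ℝ) (hA : Aᵀ = A) (a b : Fin d → ℝ) :
    a ⬝ᵥ A *ᵥ b = b ⬝ᵥ A *ᵥ a := by
  conv_lhs => rw [← hA]
  rw [← vecMul_transpose, transpose_transpose, dotProduct_comm, ← dotProduct_mulVec]

noncomputable def lmap (R : Matrix (Fin d) (Fin d) ℝ) (hR : R.det ≠ 0) :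
    EuclideanSpace ℝ (Fin d) ≃ₗ[ℝ] EuclideanSpace ℝ (Fin d) :=
  LinearEquiv.ofLinear (Matrix.toEuclideanLin R) (Matrix.toEuclideanLin R⁻¹)
    (by
      apply LinearMap.ext; intro v
      show WithLp.toLp 2 (R *ᵥ (R⁻¹ *ᵥ v.ofLp)) = v
      rw [mulVec_mulVec, mul_nonsing_inv _ (isUnit_iff_ne_zero.mpr hR), one_mulVec, WithLp.toLp_ofLp])
    (by
      apply LinearMap.ext; intro v
      show WithLp.toLp 2 (R⁻¹ *ᵥ (R *ᵥ v.ofLp)) = v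
      rw [mulVec_mulVec, nonsing_inv_mul _ (isUnit_iff_ne_zero.mpr hR), one_mulVec, WithLp.toLp_ofLp])

lemma lmap_det (R : Matrix (Fin d) (Fin d) ℝ) (hR : R.det ≠ 0) :
    LinearMap.det ((lmap R hR) : EuclideanSpace ℝ (Fin d) →ₗ[ℝ] EuclideanSpace ℝ (Fin d))
      = R.det := by
  show LinearMap.det (Matrix.toEuclideanLin R) = R.det
  rw [Matrix.toEuclideanLin_eq_toLin, LinearMap.det_toLin]

noncomputable def mequiv (R : Matrix (Fin d) (Fin d) ℝ) (hR : R.det ≠ 0) :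
    EuclideanSpace ℝ (Fin d) ≃ᵐ EuclideanSpace ℝ (Fin d) :=
  (lmap R hR).toContinuousLinearEquiv.toHomeomorph.toMeasurableEquiv

lemma map_mequiv (R : Matrix (Fin d) (Fin d) ℝ) (hR : R.det ≠ 0) :
    Measure.map (mequiv R hR) volume
      = ENNReal.ofReal |(R.det)⁻¹| • (volume : Measure (EuclideanSpace ℝ (Fin d))) := by
  have h := Measure.map_linearMap_addHaar_eq_smul_addHaar
    (μ := (volume : Measure (EuclideanSpace ℝ (Fin d))))
    (f := ((lmap R hR) : EuclideanSpace ℝ (Fin d) →ₗ[ℝ] EuclideanSpace ℝ (Fin d)))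
    (by rw [lmap_det]; exact hR)
  rw [lmap_det] at h
  convert h using 2 <;> rfl

lemma integral_comp_mulVec (R : Matrix (Fin d) (Fin d) ℝ) (hR : R.det ≠ 0)
    (f : EuclideanSpace ℝ (Fin d) → ℝ) :
    ∫ v : EuclideanSpace ℝ (Fin d), f ((WithLp.toLp 2 (R *ᵥ v) : EuclideanSpace ℝ (Fin d)))
      = |R.det|⁻¹ * ∫ z, f z := by
  have h1 : ∫ v : EuclideanSpace ℝ (Fin d), f ((WithLp.toLp 2 (R *ᵥ v) : EuclideanSpace ℝ (Fin d)))
      = ∫ y, f y ∂(Measure.map (mequiv R hR) volume) := (integral_map_equiv (mequiv R hR) f).symm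
  rw [h1, map_mequiv R hR, integral_smul_measure, ENNReal.toReal_ofReal (abs_nonneg _), abs_inv,
    smul_eq_mul]

lemma integrable_comp_mulVec_iff (R : Matrix (Fin d) (Fin d) ℝ) (hR : R.det ≠ 0)
    (f : EuclideanSpace ℝ (Fin d) → ℝ) :
    Integrable (fun v : EuclideanSpace ℝ (Fin d) => f ((WithLp.toLp 2 (R *ᵥ v) : EuclideanSpace ℝ (Fin d))))
      ↔ Integrable f := by
  have h1 := (integrable_map_equiv (μ := (volume : Measure (EuclideanSpace ℝ (Fin d))))
    (mequiv R hR) f)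
  rw [map_mequiv R hR, integrable_smul_measure (by simp [hR]) (by simp)] at h1
  exact h1.symm

lemma integrable_std : Integrable
    (fun v : EuclideanSpace ℝ (Fin d) => Real.exp (-(1/2 : ℝ) * ‖v‖^2)) := by
  have h := (GaussianFourier.integrable_cexp_neg_mul_sq_norm_add
    (V := EuclideanSpace ℝ (Fin d)) (b := (1/2 : ℂ)) (by norm_num) 0 0).norm
  refine h.congr (Filter.Eventually.of_forall fun v => ?_)
  simp [Complex.norm_exp]
  norm_num [← Complex.ofReal_pow]

variable {S : Matrix (Fin d) (Fin d) ℝ}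

section sqrtFacts

variable (hS : S.PosDef)

lemma sqrt_det_sq (hS : S.PosDef) : (CFC.sqrt S).det * (CFC.sqrt S).det = S.det := by
  rw [← det_mul, CFC.sqrt_mul_sqrt_self S hS.posSemidef.nonneg]

lemma sqrt_det_nonneg (hS : S.PosDef) : 0 ≤ (CFC.sqrt S).det := by
  have h := (CFC.sqrt_nonneg S).posSemidef
  rw [h.1.det_eq_prod_eigenvalues]
  exact Finset.prod_nonneg fun i _ => h.eigenvalues_nonneg i

lemma sqrt_det_pos (hS : S.PosDef) : 0 < (CFC.sqrt S).det := by
  rcases (sqrt_det_nonneg hS).lt_or_eq with h | h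
  · exact h
  · exfalso
    have := sqrt_det_sq hS
    rw [← h, mul_zero] at this
    exact hS.det_pos.ne (this)

lemma sqrt_transpose (hS : S.PosDef) : (CFC.sqrt S)ᵀ = (CFC.sqrt S) := by
  have h := (CFC.sqrt_nonneg S).posSemidef.1
  rw [Matrix.IsHermitian] at h
  simpa using h

/-- Key quadratic identity under the square-root substitution. -/
lemma quad_sqrt (hS : S.PosDef) (v : Fin d → ℝ) :
    ((CFC.sqrt S) *ᵥ v) ⬝ᵥ S⁻¹ *ᵥ ((CFC.sqrt S) *ᵥ v) = v ⬝ᵥ v := by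
  set R := (CFC.sqrt S) with hRdef
  have hdet : R.det ≠ 0 := (sqrt_det_pos hS).ne'
  have h1 := mul_nonsing_inv R (isUnit_iff_ne_zero.mpr hdet)
  have h2 := nonsing_inv_mul R (isUnit_iff_ne_zero.mpr hdet)
  have hRS : Rᵀ * (S⁻¹ * R) = 1 := by
    rw [sqrt_transpose hS, ← hRdef, ← CFC.sqrt_mul_sqrt_self S hS.posSemidef.nonneg, ← hRdef, Matrix.mul_inv_rev,
      mul_assoc R⁻¹ R⁻¹ R, h2, Matrix.mul_one, h1]
  rw [mulVec_mulVec]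
  conv_lhs => rw [← vecMul_transpose, ← dotProduct_mulVec, mulVec_mulVec, hRS, one_mulVec]

end sqrtFacts

set_option maxHeartbeats 1000000 in
lemma integrable_and_integral_gaussPdf (hS : S.PosDef) (μ : EuclideanSpace ℝ (Fin d)) :
    Integrable (gaussPdf μ S) ∧ ∫ z, gaussPdf μ S z = 1 := by
  obtain ⟨R, hRdetpos, hRdetsq, hRquad⟩ :
      ∃ R : Matrix (Fin d) (Fin d) ℝ, 0 < R.det ∧ R.det * R.det = S.det ∧
        ∀ v : Fin d → ℝ, (R *ᵥ v) ⬝ᵥ S⁻¹ *ᵥ (R *ᵥ v) = v ⬝ᵥ v :=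
    ⟨(CFC.sqrt S), sqrt_det_pos hS, sqrt_det_sq hS, quad_sqrt hS⟩
  set C : ℝ := (2 * Real.pi) ^ (-(d : ℝ) / 2) * S.det ^ (-(1 : ℝ) / 2) with hCdef
  set g : EuclideanSpace ℝ (Fin d) → ℝ :=
    fun w => Real.exp (-(1/2) * ⟪w, (WithLp.toLp 2 ((S⁻¹) *ᵥ w) : EuclideanSpace ℝ (Fin d))⟫) with hgdef
  have hdet : R.det ≠ 0 := hRdetpos.ne'
  have hg : ∀ v : EuclideanSpace ℝ (Fin d),
      g ((WithLp.toLp 2 (R *ᵥ v) : EuclideanSpace ℝ (Fin d))) = Real.exp (-(1/2 : ℝ) * ‖v‖^2) := by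
    intro v
    simp only [hgdef]
    rw [inner_eq_dot]
    simp only [WithLp.ofLp_toLp]
    rw [hRquad, ← real_inner_self_eq_norm_sq, inner_eq_dot]
  have hgint : Integrable g := by
    refine (integrable_comp_mulVec_iff R hdet g).mp ?_
    simpa only [hg] using integrable_std
  have hstd : ∫ v : EuclideanSpace ℝ (Fin d), Real.exp (-(1/2:ℝ) * ‖v‖^2)
      = (2*Real.pi) ^ ((d:ℝ)/2) := by
    rw [GaussianFourier.integral_rexp_neg_mul_sq_norm (by norm_num : (0:ℝ) < 1/2)]
    rw [finrank_euclideanSpace_fin]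
    congr 1
    ring
  have hcv := integral_comp_mulVec R hdet g
  simp only [hg] at hcv
  have hgval : ∫ w, g w = |R.det| * (2*Real.pi) ^ ((d:ℝ)/2) := by
    calc ∫ w, g w = |R.det| * (|R.det|⁻¹ * ∫ w, g w) := by
          field_simp
      _ = |R.det| * (2*Real.pi) ^ ((d:ℝ)/2) := by rw [← hcv, hstd]
  have hRval : |R.det| = S.det ^ ((1:ℝ)/2) := by
    rw [abs_of_pos hRdetpos]
    have h : R.det = Real.sqrt S.det := by
      rw [← hRdetsq, Real.sqrt_mul_self hRdetpos.le]
    rw [h, Real.sqrt_eq_rpow]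
  have hpdf : gaussPdf μ S = fun z => C * g (z - μ) := rfl
  constructor
  · rw [hpdf]
    exact (hgint.comp_sub_right μ).const_mul C
  · rw [hpdf]
    rw [integral_const_mul, integral_sub_right_eq_self g μ, hgval, hRval, hCdef]
    have h2pi : (0:ℝ) < 2*Real.pi := by positivity
    calc (2 * Real.pi) ^ (-(d : ℝ) / 2) * S.det ^ (-(1 : ℝ) / 2) *
          (S.det ^ ((1:ℝ)/2) * (2 * Real.pi) ^ ((d:ℝ)/2))
        = ((2 * Real.pi) ^ (-(d : ℝ) / 2) * (2 * Real.pi) ^ ((d:ℝ)/2)) *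
          (S.det ^ (-(1:ℝ) / 2) * S.det ^ ((1:ℝ)/2)) := by ring
      _ = 1 := by
          rw [← Real.rpow_add h2pi, ← Real.rpow_add hS.det_pos,
            show -(d:ℝ) / 2 + (d:ℝ) / 2 = (0:ℝ) by ring, Real.rpow_zero]
          norm_num

lemma quad_id (A : Matrix (Fin d) (Fin d) ℝ) (hA : Aᵀ = A) (z μ₁ μ₂ : EuclideanSpace ℝ (Fin d)) :
    ⟪z - (μ₂ + μ₂ - μ₁), (WithLp.toLp 2 (A *ᵥ (z - (μ₂ + μ₂ - μ₁))) : EuclideanSpace ℝ (Fin d))⟫ =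
      2 * ⟪z - μ₂, (WithLp.toLp 2 (A *ᵥ (z - μ₂)) : EuclideanSpace ℝ (Fin d))⟫
        - ⟪z - μ₁, (WithLp.toLp 2 (A *ᵥ (z - μ₁)) : EuclideanSpace ℝ (Fin d))⟫
        + 2 * ⟪μ₁ - μ₂, (WithLp.toLp 2 (A *ᵥ (μ₁ - μ₂)) : EuclideanSpace ℝ (Fin d))⟫ := by
  have hT : ∀ w : EuclideanSpace ℝ (Fin d),
      (WithLp.toLp 2 (A *ᵥ w) : EuclideanSpace ℝ (Fin d)) = Matrix.toEuclideanLin A w := fun _ => rfl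
  simp only [← WithLp.ofLp_sub, ← WithLp.ofLp_add, hT]
  have hsym : ∀ a b : EuclideanSpace ℝ (Fin d),
      ⟪a, Matrix.toEuclideanLin A b⟫ = ⟪b, Matrix.toEuclideanLin A a⟫ := by
    intro a b
    rw [inner_eq_dot, inner_eq_dot]
    exact dot_symm A hA a b
  have e2 : z - μ₂ = (z - μ₁) + (μ₁ - μ₂) := by abel
  have e3 : z - (μ₂ + μ₂ - μ₁) = (z - μ₁) + ((μ₁ - μ₂) + (μ₁ - μ₂)) := by abel
  rw [e2, e3]
  generalize z - μ₁ = x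
  generalize μ₁ - μ₂ = u
  simp only [inner_add_left, inner_add_right, map_add]
  linarith [hsym x u]

lemma exp_algebra (C a1 a2 au s : ℝ) (hs : s = 1/2 * au) :
    (C * Real.exp (-(1/2) * a2))^2
      = Real.exp (2*s) * (C * Real.exp (-(1/2) * (2*a2 - a1 + 2*au)))
        * (C * Real.exp (-(1/2) * a1)) := by
  subst hs
  have h : Real.exp (-(1/2) * a2) * Real.exp (-(1/2) * a2)
      = Real.exp (2*(1/2*au)) * Real.exp (-(1/2)*(2*a2-a1+2*au)) * Real.exp (-(1/2)*a1) := by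
    rw [← Real.exp_add, ← Real.exp_add, ← Real.exp_add]
    congr 1
    ring
  calc (C * Real.exp (-(1/2) * a2))^2
      = C^2 * (Real.exp (-(1/2) * a2) * Real.exp (-(1/2) * a2)) := by ring
    _ = C^2 * (Real.exp (2*(1/2*au)) * Real.exp (-(1/2)*(2*a2-a1+2*au))
          * Real.exp (-(1/2)*a1)) := by rw [h]
    _ = _ := by ring

end ChiSqAux

/-- Closed form of the χ²-divergence (with generator `f(t) = (1/2)(t−1)²`) between two
equal-covariance Gaussians: with `s = (1/2)‖μ₁ − μ₂‖²_{Σ⁻¹}`, the divergence equals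
`(1/2)(exp(2s) − 1)`. -/
theorem chiSq_gaussian_gaussian_same_cov {d : ℕ} (hd : 0 < d)
    (μ₁ μ₂ : EuclideanSpace ℝ (Fin d)) (S : Matrix (Fin d) (Fin d) ℝ)
    (hSs : S.IsSymm) (hS : S.PosDef) (s : ℝ)
    (hs : s = (1 / 2) * ⟪μ₁ - μ₂, (WithLp.toLp 2 ((S⁻¹).mulVec (μ₁ - μ₂)) : EuclideanSpace ℝ (Fin d))⟫) :
    (∫ z : EuclideanSpace ℝ (Fin d),
        gaussPdf μ₁ S z * ((1 / 2) * (gaussPdf μ₂ S z / gaussPdf μ₁ S z - 1) ^ 2)) =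
      (1 / 2) * (Real.exp (2 * s) - 1) := by
  have hA : S⁻¹.transpose = S⁻¹ := by
    rw [Matrix.transpose_nonsing_inv, hSs]
  obtain ⟨hint1, hval1⟩ := ChiSqAux.integrable_and_integral_gaussPdf hS μ₁
  obtain ⟨hint2, hval2⟩ := ChiSqAux.integrable_and_integral_gaussPdf hS μ₂
  obtain ⟨hint3, hval3⟩ := ChiSqAux.integrable_and_integral_gaussPdf hS (μ₂ + μ₂ - μ₁)
  have hpt : ∀ z : EuclideanSpace ℝ (Fin d),
      gaussPdf μ₁ S z * ((1 / 2) * (gaussPdf μ₂ S z / gaussPdf μ₁ S z - 1) ^ 2)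
      = (1/2) * Real.exp (2*s) * gaussPdf (μ₂ + μ₂ - μ₁) S z
          - gaussPdf μ₂ S z + (1/2) * gaussPdf μ₁ S z := by
    intro z
    have hp : 0 < gaussPdf μ₁ S z :=
      mul_pos (mul_pos (Real.rpow_pos_of_pos (by positivity) _)
        (Real.rpow_pos_of_pos hS.det_pos _)) (Real.exp_pos _)
    have hkey : gaussPdf μ₂ S z ^ 2
        = Real.exp (2*s) * gaussPdf (μ₂ + μ₂ - μ₁) S z * gaussPdf μ₁ S z := by
      have hq := ChiSqAux.quad_id S⁻¹ hA z μ₁ μ₂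
      show ((2 * Real.pi) ^ (-(d : ℝ) / 2) * S.det ^ (-(1 : ℝ) / 2) *
          Real.exp (-(1 / 2) * ⟪z - μ₂, (WithLp.toLp 2 ((S⁻¹).mulVec (z - μ₂)) : EuclideanSpace ℝ (Fin d))⟫)) ^ 2
        = Real.exp (2*s) * ((2 * Real.pi) ^ (-(d : ℝ) / 2) * S.det ^ (-(1 : ℝ) / 2) *
            Real.exp (-(1 / 2) * ⟪z - (μ₂ + μ₂ - μ₁),
              (WithLp.toLp 2 ((S⁻¹).mulVec (z - (μ₂ + μ₂ - μ₁))) : EuclideanSpace ℝ (Fin d))⟫))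
          * ((2 * Real.pi) ^ (-(d : ℝ) / 2) * S.det ^ (-(1 : ℝ) / 2) *
            Real.exp (-(1 / 2) * ⟪z - μ₁, (WithLp.toLp 2 ((S⁻¹).mulVec (z - μ₁)) : EuclideanSpace ℝ (Fin d))⟫))
      rw [hq]
      exact ChiSqAux.exp_algebra _ _ _ _ s hs
    calc gaussPdf μ₁ S z * ((1 / 2) * (gaussPdf μ₂ S z / gaussPdf μ₁ S z - 1) ^ 2)
        = (gaussPdf μ₂ S z ^ 2 / gaussPdf μ₁ S z - 2 * gaussPdf μ₂ S z + gaussPdf μ₁ S z)/2 := by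
          field_simp
          ring
      _ = (Real.exp (2*s) * gaussPdf (μ₂ + μ₂ - μ₁) S z - 2 * gaussPdf μ₂ S z
            + gaussPdf μ₁ S z)/2 := by
          rw [hkey, mul_div_assoc, div_self hp.ne', mul_one]
      _ = _ := by ring
  rw [integral_congr_ae (Filter.Eventually.of_forall hpt)]
  have i1 : Integrable (fun z => (1/2) * Real.exp (2*s) * gaussPdf (μ₂ + μ₂ - μ₁) S z) :=
    hint3.const_mul _
  have i3 : Integrable (fun z => (1/2) * gaussPdf μ₁ S z) := hint1.const_mul _
  have i12 : Integrable (fun z => (1/2) * Real.exp (2*s) * gaussPdf (μ₂ + μ₂ - μ₁) S z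
      - gaussPdf μ₂ S z) := i1.sub hint2
  rw [integral_add i12 i3, integral_sub i1 hint2, integral_const_mul,
    integral_const_mul, hval1, hval2, hval3]
  ring
end

section
/- Let d be a positive natural number, let μ₁, μ₂ ∈ EuclideanSpace ℝ (Fin d), let Σ : Matrix (Fin d) (Fin d) ℝ be a symmetric positive definite matrix, and let b > 0. If the χ²-divergence ∫ N(z; μ₁, Σ) · (1/2) · (N(z; μ₂, Σ)/N(z; μ₁, Σ) − 1)² dz ≤ b, then ⟪μ₁ − μ₂, Σ⁻¹.mulVec (μ₁ − μ₂)⟫ ≤ Real.log (1 + 2·b). That is, a χ²-divergence distortion budget of b implies a bound on the Σ⁻¹-weighted squared distance between the means, analogous to the equal-covariance KL constraint with a new constant. -/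
open MeasureTheory
open scoped RealInnerProductSpace
open Matrix

section Aux
variable {d : ℕ}

lemma inner_eq_dot (x y : EuclideanSpace ℝ (Fin d)) :
    ⟪x, y⟫ = (x : Fin d → ℝ) ⬝ᵥ (y : Fin d → ℝ) := by
  simp [PiLp.inner_apply, RCLike.inner_apply, dotProduct, mul_comm]

lemma gaussPdf_pos {μ : EuclideanSpace ℝ (Fin d)} {S : Matrix (Fin d) (Fin d) ℝ}
    (hS : S.PosDef) (z : EuclideanSpace ℝ (Fin d)) : 0 < gaussPdf μ S z := by
  unfold gaussPdf
  have h1 : (0:ℝ) < (2 * Real.pi) ^ (-(d : ℝ) / 2) :=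
    Real.rpow_pos_of_pos (by positivity) _
  have h2 : (0:ℝ) < S.det ^ (-(1 : ℝ) / 2) := Real.rpow_pos_of_pos hS.det_pos _
  positivity
end Aux

section Norm
variable {d : ℕ}

open scoped MatrixOrder in
lemma gaussPdf_norm (S : Matrix (Fin d) (Fin d) ℝ) (hS : S.PosDef)
    (μ : EuclideanSpace ℝ (Fin d)) :
    Integrable (gaussPdf μ S) ∧ ∫ z, gaussPdf μ S z = 1 := by
  classical
  have hA : (S⁻¹).PosDef := hS.inv
  set A := S⁻¹ with hAdef
  set B := CFC.sqrt A with hBdef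
  have hBB : B * B = A := CFC.sqrt_mul_sqrt_self A (Matrix.PosSemidef.nonneg hA.posSemidef)
  have hBsym : Bᵀ = B := by
    have h := (CFC.sqrt_nonneg A).posSemidef.isHermitian
    simpa [Matrix.IsHermitian, Matrix.conjTranspose_eq_transpose_of_trivial] using h
  have hSdet : (0:ℝ) < S.det := hS.det_pos
  have hdetA : A.det = S.det⁻¹ := by
    rw [hAdef, Matrix.det_nonsing_inv, Ring.inverse_eq_inv']
  have hAdetpos : (0:ℝ) < A.det := by rw [hdetA]; positivity
  have hdetBB : B.det * B.det = A.det := by rw [← Matrix.det_mul, hBB]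
  have hBdet : B.det ≠ 0 := by
    intro h; rw [h, mul_zero] at hdetBB; exact hAdetpos.ne hdetBB
  have habs : |B.det| = Real.sqrt A.det := by
    rw [← hdetBB, Real.sqrt_mul_self_eq_abs]
  -- quadratic form via B
  set toE : (Fin d → ℝ) → EuclideanSpace ℝ (Fin d) :=
    ⇑(WithLp.equiv 2 (Fin d → ℝ)).symm with htoE
  have key : ∀ w : EuclideanSpace ℝ (Fin d),
      ⟪w, (WithLp.toLp 2 (A.mulVec w) : EuclideanSpace ℝ (Fin d))⟫ = ⟪toE (B *ᵥ w), toE (B *ᵥ w)⟫ := by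
    intro w
    simp only [inner_eq_dot]
    show (w : Fin d → ℝ) ⬝ᵥ A *ᵥ (w : Fin d → ℝ)
      = (B *ᵥ (w : Fin d → ℝ)) ⬝ᵥ (B *ᵥ (w : Fin d → ℝ))
    calc (w : Fin d → ℝ) ⬝ᵥ A *ᵥ (w : Fin d → ℝ)
        = (A *ᵥ (w : Fin d → ℝ)) ⬝ᵥ (w : Fin d → ℝ) := dotProduct_comm _ _
      _ = (B *ᵥ (B *ᵥ (w : Fin d → ℝ))) ⬝ᵥ (w : Fin d → ℝ) := by
          rw [Matrix.mulVec_mulVec, hBB]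
      _ = ((B.mulVec w : Fin d → ℝ) ᵥ* B) ⬝ᵥ (w : Fin d → ℝ) := by
          rw [← hBsym, Matrix.mulVec_transpose, hBsym]
      _ = (B.mulVec w : Fin d → ℝ) ⬝ᵥ B *ᵥ (w : Fin d → ℝ) := by
          rw [Matrix.dotProduct_mulVec]

  -- the linear change of variables
  have hBu : Invertible B := B.invertibleOfIsUnitDet (isUnit_iff_ne_zero.mpr hBdet)
  let pe : EuclideanSpace ℝ (Fin d) ≃ₗ[ℝ] (Fin d → ℝ) := WithLp.linearEquiv 2 ℝ (Fin d → ℝ)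
  let L : EuclideanSpace ℝ (Fin d) ≃ₗ[ℝ] EuclideanSpace ℝ (Fin d) :=
    pe.trans ((B.toLinearEquiv' hBu).trans pe.symm)
  have hLdet : LinearMap.det (L.toLinearMap) = B.det := by
    have h1 : L.toLinearMap
        = (pe.symm : (Fin d → ℝ) →ₗ[ℝ] EuclideanSpace ℝ (Fin d)) ∘ₗ (Matrix.toLin' B) ∘ₗ
          ((pe.symm.symm : EuclideanSpace ℝ (Fin d) →ₗ[ℝ] (Fin d → ℝ))) := rfl
    rw [h1, LinearMap.det_conj, LinearMap.det_toLin']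
  let eM : EuclideanSpace ℝ (Fin d) ≃ᵐ EuclideanSpace ℝ (Fin d) :=
    L.toContinuousLinearEquiv.toHomeomorph.toMeasurableEquiv
  have hcoe : ⇑eM = ⇑L.toLinearMap := rfl
  have hmap : Measure.map eM volume = ENNReal.ofReal |B.det⁻¹| • volume := by
    rw [hcoe, Measure.map_linearMap_addHaar_eq_smul_addHaar volume
      (by rw [hLdet]; exact hBdet), hLdet]
  have heMapp : ∀ z : EuclideanSpace ℝ (Fin d), eM z = toE (B *ᵥ z) := fun _ => rfl
  set C : ℝ := (2 * Real.pi) ^ (-(d : ℝ) / 2) * S.det ^ (-(1 : ℝ) / 2) with hC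
  set h : EuclideanSpace ℝ (Fin d) → ℝ :=
    fun v => C * Real.exp (-(1/2) * ⟪v, v⟫) with hh
  have hgauss_eq : ∀ z, gaussPdf μ S z = h (eM (z - μ)) := by
    intro z
    rw [hh]
    unfold gaussPdf
    rw [heMapp, ← WithLp.ofLp_sub (x := z) (y := μ), key (z - μ)]
  -- base integrability and integral
  have hbase : Integrable (fun v : EuclideanSpace ℝ (Fin d) =>
      Real.exp (-(1/2) * ‖v‖ ^ 2)) := by
    have h0 := (GaussianFourier.integrable_cexp_neg_mul_sq_norm_add
      (V := EuclideanSpace ℝ (Fin d)) (b := (1/2 : ℂ)) (by norm_num) 0 0).norm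
    refine h0.congr (Filter.Eventually.of_forall fun v => ?_)
    simp [Complex.norm_exp, ← Complex.ofReal_pow]
  have hbase_int : ∫ v : EuclideanSpace ℝ (Fin d), Real.exp (-(1/2) * ‖v‖ ^ 2)
      = (2 * Real.pi) ^ ((d : ℝ) / 2) := by
    have h0 := GaussianFourier.integral_rexp_neg_mul_sq_norm (V := EuclideanSpace ℝ (Fin d))
      (b := (1/2 : ℝ)) (by norm_num)
    rw [h0]
    have e3 : Real.pi / (1/2) = 2 * Real.pi := by ring
    rw [e3, finrank_euclideanSpace_fin]
  have hhint : Integrable h := by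
    refine (hbase.const_mul C).congr (Filter.Eventually.of_forall fun v => ?_)
    show C * Real.exp (-(1/2) * ‖v‖ ^ 2) = C * Real.exp (-(1/2) * ⟪v, v⟫)
    rw [real_inner_self_eq_norm_sq]
  have hhval : ∫ v, h v = C * (2 * Real.pi) ^ ((d : ℝ) / 2) := by
    have : ∀ v : EuclideanSpace ℝ (Fin d), h v = C * Real.exp (-(1/2) * ‖v‖ ^ 2) := by
      intro v
      show C * Real.exp (-(1/2) * ⟪v, v⟫) = C * Real.exp (-(1/2) * ‖v‖ ^ 2)
      rw [real_inner_self_eq_norm_sq]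
    simp_rw [this]
    rw [integral_const_mul, hbase_int]
  have hc0 : (ENNReal.ofReal |B.det⁻¹|) ≠ 0 := by
    simp [ENNReal.ofReal_eq_zero, abs_pos, hBdet]
  have hctop : (ENNReal.ofReal |B.det⁻¹|) ≠ ⊤ := ENNReal.ofReal_ne_top
  have hint_map : Integrable h (Measure.map eM volume) := by
    rw [hmap]
    exact (integrable_smul_measure hc0 hctop).mpr hhint
  have hcompInt : Integrable (fun z => h (eM z)) :=
    (MeasureTheory.integrable_map_equiv eM h).mp hint_map
  have hint : Integrable (gaussPdf μ S) := by
    refine (hcompInt.comp_sub_right μ).congr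
      (Filter.Eventually.of_forall fun z => (hgauss_eq z).symm)
  refine ⟨hint, ?_⟩
  have habsinv : |B.det⁻¹| = Real.sqrt S.det := by
    rw [abs_inv, habs, hdetA, Real.sqrt_inv, inv_inv]
  calc ∫ z, gaussPdf μ S z = ∫ z, (fun w => h (eM w)) (z - μ) := by
        simp_rw [hgauss_eq]
    _ = ∫ w, h (eM w) := integral_sub_right_eq_self (μ := volume) (fun w => h (eM w)) μ
    _ = ∫ v, h v ∂(Measure.map eM volume) := (MeasureTheory.integral_map_equiv eM h).symm
    _ = |B.det⁻¹| * ∫ v, h v := by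
        rw [hmap, integral_smul_measure, ENNReal.toReal_ofReal (abs_nonneg _), smul_eq_mul]
    _ = 1 := by
        rw [hhval, habsinv, hC]
        have h2pi : (0:ℝ) < 2 * Real.pi := by positivity
        have e1 : (2 * Real.pi) ^ (-(d : ℝ) / 2) * (2 * Real.pi) ^ ((d : ℝ) / 2) = 1 := by
          rw [← Real.rpow_add h2pi, neg_div, neg_add_cancel, Real.rpow_zero]
        have e2 : S.det ^ (-(1 : ℝ) / 2) = (Real.sqrt S.det)⁻¹ := by
          rw [Real.sqrt_eq_rpow, ← Real.rpow_neg hSdet.le]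
          norm_num
        have hs0 : Real.sqrt S.det ≠ 0 := (Real.sqrt_pos.mpr hSdet).ne'
        rw [e2]
        calc Real.sqrt S.det *
              ((2 * Real.pi) ^ (-(d : ℝ) / 2) * (Real.sqrt S.det)⁻¹ * (2 * Real.pi) ^ ((d : ℝ) / 2))
            = (Real.sqrt S.det * (Real.sqrt S.det)⁻¹) *
              ((2 * Real.pi) ^ (-(d : ℝ) / 2) * (2 * Real.pi) ^ ((d : ℝ) / 2)) := by ring
          _ = 1 := by rw [mul_inv_cancel₀ hs0, e1, one_mul]

end Norm

lemma exp_sq_helper (c a Q m : ℝ) :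
    (c * Real.exp (-(1/2) * a)) ^ 2
      = Real.exp m * (c * Real.exp (-(1/2) * (2*a - Q + 2*m)) * (c * Real.exp (-(1/2) * Q))) := by
  have h : Real.exp (-(1/2) * a) ^ 2
      = Real.exp m * (Real.exp (-(1/2) * (2*a - Q + 2*m)) * Real.exp (-(1/2) * Q)) := by
    rw [← Real.exp_add, ← Real.exp_add, pow_two, ← Real.exp_add]
    congr 1
    ring
  linear_combination (c^2) * h

/-- A χ²-divergence distortion budget of `b` between two equal-covariance Gaussians implies the
bound `‖μ₁ − μ₂‖²_{Σ⁻¹} ≤ log(1 + 2b)` on the weighted squared distance between the means. -/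
theorem chiSq_budget_imp_mean_dist_bound {d : ℕ} (hd : 0 < d)
    (μ₁ μ₂ : EuclideanSpace ℝ (Fin d)) (S : Matrix (Fin d) (Fin d) ℝ)
    (hSs : S.IsSymm) (hS : S.PosDef) (b : ℝ) (hb : 0 < b)
    (hdiv : (∫ z : EuclideanSpace ℝ (Fin d),
        gaussPdf μ₁ S z * ((1 / 2) * (gaussPdf μ₂ S z / gaussPdf μ₁ S z - 1) ^ 2)) ≤ b) :
    ⟪μ₁ - μ₂, (WithLp.toLp 2 ((S⁻¹).mulVec (μ₁ - μ₂)) : EuclideanSpace ℝ (Fin d))⟫ ≤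
      Real.log (1 + 2 * b) := by
  classical
  set ν : EuclideanSpace ℝ (Fin d) := μ₂ + (μ₂ - μ₁) with hν
  set m : ℝ := ⟪μ₁ - μ₂, (WithLp.toLp 2 ((S⁻¹).mulVec (μ₁ - μ₂)) : EuclideanSpace ℝ (Fin d))⟫ with hm
  set c : ℝ := (2 * Real.pi) ^ (-(d : ℝ) / 2) * S.det ^ (-(1 : ℝ) / 2) with hc
  let pe : EuclideanSpace ℝ (Fin d) ≃ₗ[ℝ] (Fin d → ℝ) := WithLp.linearEquiv 2 ℝ (Fin d → ℝ)
  let T : EuclideanSpace ℝ (Fin d) →ₗ[ℝ] EuclideanSpace ℝ (Fin d) :=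
    (pe.symm.toLinearMap) ∘ₗ (Matrix.mulVecLin S⁻¹) ∘ₗ pe.toLinearMap
  have hT : ∀ x : EuclideanSpace ℝ (Fin d),
      (WithLp.toLp 2 ((S⁻¹).mulVec x) : EuclideanSpace ℝ (Fin d)) = T x := fun _ => rfl
  have quad : ∀ u δ : EuclideanSpace ℝ (Fin d),
      ⟪u + δ, T (u + δ)⟫ = 2 * ⟪u, T u⟫ - ⟪u - δ, T (u - δ)⟫ + 2 * ⟪δ, T δ⟫ := by
    intro u δ
    simp only [map_add, map_sub, inner_add_left, inner_add_right, inner_sub_left, inner_sub_right]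
    ring
  have hmT : m = ⟪μ₁ - μ₂, T (μ₁ - μ₂)⟫ := by rw [hm, ← WithLp.ofLp_sub (x := μ₁) (y := μ₂), hT]
  -- the three densities at a point
  have hq : ∀ z, gaussPdf μ₂ S z = c * Real.exp (-(1/2) * ⟪z - μ₂, T (z - μ₂)⟫) := by
    intro z; unfold gaussPdf; rw [← WithLp.ofLp_sub (x := z) (y := μ₂), hT]
  have hp : ∀ z, gaussPdf μ₁ S z
      = c * Real.exp (-(1/2) * ⟪(z - μ₂) - (μ₁ - μ₂), T ((z - μ₂) - (μ₁ - μ₂))⟫) := by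
    intro z
    have hz1 : (z - μ₁ : EuclideanSpace ℝ (Fin d)) = (z - μ₂) - (μ₁ - μ₂) := by abel
    unfold gaussPdf; rw [← WithLp.ofLp_sub (x := z) (y := μ₁), hT, hz1]
  have hr : ∀ z, gaussPdf ν S z
      = c * Real.exp (-(1/2) * (2 * ⟪z - μ₂, T (z - μ₂)⟫
          - ⟪(z - μ₂) - (μ₁ - μ₂), T ((z - μ₂) - (μ₁ - μ₂))⟫ + 2 * m)) := by
    intro z
    have hzν : (z - ν : EuclideanSpace ℝ (Fin d)) = (z - μ₂) + (μ₁ - μ₂) := by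
      rw [hν]; abel
    unfold gaussPdf; rw [← WithLp.ofLp_sub (x := z) (y := ν), hT, hzν, quad (z - μ₂) (μ₁ - μ₂), ← hmT]
  have key2 : ∀ z, gaussPdf μ₂ S z ^ 2
      = Real.exp m * (gaussPdf ν S z * gaussPdf μ₁ S z) := by
    intro z
    rw [hq z, hp z, hr z]
    exact exp_sq_helper c _ _ m
  have hpt : ∀ z, gaussPdf μ₁ S z * ((1/2) * (gaussPdf μ₂ S z / gaussPdf μ₁ S z - 1) ^ 2)
      = (1/2) * (Real.exp m * gaussPdf ν S z - 2 * gaussPdf μ₂ S z + gaussPdf μ₁ S z) := by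
    intro z
    have hp0 : (0:ℝ) < gaussPdf μ₁ S z := gaussPdf_pos hS z
    have hk := key2 z
    field_simp
    linear_combination hk
  obtain ⟨hip, hep⟩ := gaussPdf_norm S hS μ₁
  obtain ⟨hiq, heq⟩ := gaussPdf_norm S hS μ₂
  obtain ⟨hir, her⟩ := gaussPdf_norm S hS ν
  have h1 : Integrable (fun z => Real.exp m * gaussPdf ν S z) := hir.const_mul _
  have h2 : Integrable (fun z => 2 * gaussPdf μ₂ S z) := hiq.const_mul _
  have h12 : Integrable (fun z => Real.exp m * gaussPdf ν S z - 2 * gaussPdf μ₂ S z) :=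
    h1.sub h2
  have hval : (∫ z : EuclideanSpace ℝ (Fin d),
      gaussPdf μ₁ S z * ((1 / 2) * (gaussPdf μ₂ S z / gaussPdf μ₁ S z - 1) ^ 2))
      = (1/2) * (Real.exp m - 1) := by
    calc (∫ z : EuclideanSpace ℝ (Fin d),
        gaussPdf μ₁ S z * ((1 / 2) * (gaussPdf μ₂ S z / gaussPdf μ₁ S z - 1) ^ 2))
        = ∫ z : EuclideanSpace ℝ (Fin d),
            (1/2) * (Real.exp m * gaussPdf ν S z - 2 * gaussPdf μ₂ S z + gaussPdf μ₁ S z) := by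
          exact integral_congr_ae (Filter.Eventually.of_forall hpt)
      _ = (1/2) * ∫ z : EuclideanSpace ℝ (Fin d),
            (Real.exp m * gaussPdf ν S z - 2 * gaussPdf μ₂ S z + gaussPdf μ₁ S z) :=
          integral_const_mul _ _
      _ = (1/2) * (((∫ z, Real.exp m * gaussPdf ν S z) - ∫ z, 2 * gaussPdf μ₂ S z)
            + ∫ z, gaussPdf μ₁ S z) := by
          rw [integral_add h12 hip, integral_sub h1 h2]
      _ = (1/2) * (Real.exp m - 1) := by
          rw [integral_const_mul, integral_const_mul, hep, heq, her]
          ring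
  rw [hval] at hdiv
  have hle : Real.exp m ≤ 1 + 2 * b := by linarith
  have h0 : (0:ℝ) < 1 + 2 * b := by linarith
  exact (Real.le_log_iff_exp_le h0).mpr hle
end

section
/- Let ε, δ ∈ (0, 1), L > 0, σ₁ > 0, and set σ² = 2 · L² · Real.log (1.25/δ) / ε². Then: (a) for all z, z' ∈ ℝ with |z − z'| ≤ L and every measurable set S ⊆ ℝ, ProbabilityTheory.gaussianReal z σ² S ≤ ENNReal.ofReal (Real.exp ε) * ProbabilityTheory.gaussianReal z' σ² S + ENNReal.ofReal δ; and (b) for every μ₁ ∈ ℝ, the KL divergence between the noise-inflated and original latent Gaussians satisfies klDiv (gaussianReal μ₁ (σ₁² + σ²)) (gaussianReal μ₁ σ₁²) ≤ ENNReal.ofReal (L² · Real.log (1.25/δ) / (ε² · σ₁²)). Consequently, whenever the distortion budget b satisfies b ≥ L² · Real.log (1.25/δ) / (ε² · σ₁²), the additive Gaussian mechanism is (ε, δ)-differentially private and satisfies the KL distortion constraint klDiv ≤ ENNReal.ofReal b. -/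
open MeasureTheory ProbabilityTheory
open scoped ENNReal

namespace InformationTheory

open scoped Classical in
/-- Kullback–Leibler divergence between two measures (as in current Mathlib;
for probability measures the correction term `ν univ − μ univ` vanishes). -/
noncomputable def klDiv' {α : Type*} [MeasurableSpace α] (μ ν : Measure α) : ℝ≥0∞ :=
  if μ ≪ ν ∧ Integrable (llr μ ν) μ then
    ENNReal.ofReal (∫ x, llr μ ν x ∂μ) + ν Set.univ - μ Set.univ
  else ⊤

end InformationTheory


section AuxGaussianMechanism

open MeasureTheory ProbabilityTheory Real Set Filter
open scoped ENNReal NNReal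


-- A: half-line integral of x * exp(-x^2/2)
lemma aux_integral_Ioi (s : ℝ) :
    ∫ x in Ioi s, x * rexp (-x ^ 2 / 2) = rexp (-s ^ 2 / 2) := by
  have hderiv : ∀ x ∈ Ici s, HasDerivAt (fun x : ℝ => -rexp (-x ^ 2 / 2))
      (x * rexp (-x ^ 2 / 2)) x := by
    intro x _
    have h1 : HasDerivAt (fun x : ℝ => -x ^ 2 / 2) (-x) x := by
      have := ((hasDerivAt_pow 2 x).neg).div_const 2
      simpa using this.congr_deriv (by ring)
    have := (h1.exp).neg
    refine this.congr_deriv ?_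
    ring
  have hint : IntegrableOn (fun x : ℝ => x * rexp (-x ^ 2 / 2)) (Ioi s) := by
    have := integrable_mul_exp_neg_mul_sq (b := (1:ℝ)/2) (by norm_num)
    have h2 : (fun x : ℝ => x * rexp (-(1/2) * x ^ 2)) = fun x : ℝ => x * rexp (-x ^ 2 / 2) := by
      funext x; ring_nf
    rw [h2] at this
    exact this.integrableOn
  have htop : Tendsto (fun x : ℝ => -rexp (-x ^ 2 / 2)) atTop (nhds 0) := by
    rw [show (0:ℝ) = -0 by norm_num]
    refine Tendsto.neg ?_
    apply Real.tendsto_exp_atBot.comp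
    have : Tendsto (fun x : ℝ => x ^ 2) atTop atTop := tendsto_pow_atTop two_ne_zero
    have := Filter.Tendsto.const_mul_atTop_of_neg (r := -(1:ℝ)/2) (by norm_num) this
    apply this.congr'
    filter_upwards with x
    ring
  have := integral_Ioi_of_hasDerivAt_of_tendsto' hderiv hint htop
  rw [this]; simp

lemma aux_integrable_sq_exp {b : ℝ} (hb : 0 < b) :
    Integrable (fun x : ℝ => x ^ 2 * rexp (-b * x ^ 2)) := by
  have := integrable_rpow_mul_exp_neg_mul_sq hb (s := 2) (by norm_num)
  apply this.congr
  filter_upwards with x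
  rw [show (2:ℝ) = ((2:ℕ):ℝ) by norm_num, Real.rpow_natCast]

lemma aux_integral_sq_exp {b : ℝ} (hb : 0 < b) :
    ∫ x : ℝ, x ^ 2 * rexp (-b * x ^ 2) = (2 * b)⁻¹ * Real.sqrt (π / b) := by
  have hderiv : ∀ x : ℝ, HasDerivAt (fun x : ℝ => -(2 * b)⁻¹ * (x * rexp (-b * x ^ 2)))
      (x ^ 2 * rexp (-b * x ^ 2) - (2 * b)⁻¹ * rexp (-b * x ^ 2)) x := by
    intro x
    have h1 : HasDerivAt (fun x : ℝ => -b * x ^ 2) (-b * (2 * x)) x := by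
      have := (hasDerivAt_pow 2 x).const_mul (-b)
      simpa using this.congr_deriv (by ring)
    have h2 : HasDerivAt (fun x : ℝ => x * rexp (-b * x ^ 2))
        (1 * rexp (-b * x ^ 2) + x * (rexp (-b * x ^ 2) * (-b * (2 * x)))) x :=
      (hasDerivAt_id x).mul h1.exp
    have := h2.const_mul (-(2 * b)⁻¹)
    refine this.congr_deriv ?_
    field_simp
    ring
  have hint : Integrable (fun x : ℝ => x ^ 2 * rexp (-b * x ^ 2) - (2 * b)⁻¹ * rexp (-b * x ^ 2)) :=
    (aux_integrable_sq_exp hb).sub ((integrable_exp_neg_mul_sq hb).const_mul _)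
  have hlim : Tendsto (fun x : ℝ => x * rexp (-b * x ^ 2)) atTop (nhds 0) := by
    have h := rpow_mul_exp_neg_mul_sq_isLittleO_exp_neg hb 1
    have h0 : Tendsto (fun x : ℝ => rexp (-(1/2) * x)) atTop (nhds 0) :=
      Real.tendsto_exp_atBot.comp (Tendsto.const_mul_atTop_of_neg (by norm_num) tendsto_id)
    have := h.tendsto_zero_of_tendsto h0
    apply this.congr'
    filter_upwards [eventually_ge_atTop (0:ℝ)] with x hx
    rw [Real.rpow_one]
  have hlim' : Tendsto (fun x : ℝ => x * rexp (-b * x ^ 2)) atBot (nhds 0) := by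
    have := (hlim.comp tendsto_neg_atBot_atTop)
    rw [show ((fun x : ℝ => x * rexp (-b * x ^ 2)) ∘ fun x : ℝ => -x) = fun x : ℝ => -(x * rexp (-b * x ^ 2)) from by funext x; simp only [Function.comp]; ring_nf] at this
    simpa using this.neg
  have hFbot : Tendsto (fun x : ℝ => -(2 * b)⁻¹ * (x * rexp (-b * x ^ 2))) atBot (nhds 0) := by
    simpa using hlim'.const_mul (-(2 * b)⁻¹)
  have hFtop : Tendsto (fun x : ℝ => -(2 * b)⁻¹ * (x * rexp (-b * x ^ 2))) atTop (nhds 0) := by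
    simpa using hlim.const_mul (-(2 * b)⁻¹)
  have hzero : ∫ x : ℝ, (x ^ 2 * rexp (-b * x ^ 2) - (2 * b)⁻¹ * rexp (-b * x ^ 2)) = 0 := by
    have := integral_of_hasDerivAt_of_tendsto hderiv hint hFbot hFtop
    simpa using this
  have hsplit := integral_sub (aux_integrable_sq_exp hb) ((integrable_exp_neg_mul_sq hb).const_mul ((2*b)⁻¹))
  rw [hsplit] at hzero
  have hg : ∫ x : ℝ, (2 * b)⁻¹ * rexp (-b * x ^ 2) = (2 * b)⁻¹ * Real.sqrt (π / b) := by
    rw [integral_const_mul, integral_gaussian]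
  linarith [hzero, hg]

lemma aux_std_pdf (x : ℝ) : gaussianPDFReal 0 1 x = (Real.sqrt (2 * π))⁻¹ * rexp (-x ^ 2 / 2) := by
  simp [gaussianPDFReal]

lemma aux_gauss_symm {s : Set ℝ} (hs : MeasurableSet s) :
    gaussianReal 0 1 ((fun y : ℝ => -y) ⁻¹' s) = gaussianReal 0 1 s := by
  have h := gaussianReal_map_const_mul (μ := (0:ℝ)) (v := 1) (-1)
  have h1 : (NNReal.mk ((-1:ℝ)^2) (sq_nonneg _)) * 1 = 1 := by
    ext; norm_num
  rw [h1] at h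
  norm_num at h
  conv_rhs => rw [← h]
  rw [Measure.map_apply measurable_neg hs]

lemma aux_gauss_null_singleton (c : ℝ) : gaussianReal 0 1 {c} = 0 :=
  gaussianReal_absolutelyContinuous 0 one_ne_zero (volume_singleton)

lemma aux_gauss_Ici_zero : gaussianReal 0 1 (Ici (0:ℝ)) = 2⁻¹ := by
  have h1 : gaussianReal 0 1 (Ici (0:ℝ)) + gaussianReal 0 1 (Iio (0:ℝ)) = 1 := by
    have := measure_add_measure_compl (μ := gaussianReal 0 1) (s := Ici (0:ℝ)) measurableSet_Ici
    simpa [compl_Ici] using this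
  have h2 : gaussianReal 0 1 (Iio (0:ℝ)) = gaussianReal 0 1 (Ioi (0:ℝ)) := by
    have := aux_gauss_symm (s := Ioi (0:ℝ)) measurableSet_Ioi
    rw [← this]
    congr 1
    ext y; simp
  have h3 : gaussianReal 0 1 (Ioi (0:ℝ)) = gaussianReal 0 1 (Ici (0:ℝ)) := by
    rw [show Ioi (0:ℝ) = Ici 0 \ {0} by ext y; simp [lt_iff_le_and_ne, eq_comm],
      measure_diff_null (aux_gauss_null_singleton 0)]
  rw [h2, h3] at h1
  have hfin : gaussianReal 0 1 (Ici (0:ℝ)) ≠ ⊤ := measure_ne_top _ _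
  -- from x + x = 1 conclude x = 2⁻¹
  have : (2 : ℝ≥0∞) * gaussianReal 0 1 (Ici (0:ℝ)) = 1 := by rw [two_mul]; exact h1
  rw [show ((2:ℝ≥0∞))⁻¹ = 1/2 by rw [one_div], ENNReal.eq_div_iff (by norm_num) (by norm_num)]
  exact this

lemma aux_pdf_le (x : ℝ) : gaussianPDFReal 0 1 x ≤ (Real.sqrt (2 * π))⁻¹ := by
  rw [aux_std_pdf]
  have h1 : rexp (-x ^ 2 / 2) ≤ 1 := by
    rw [Real.exp_le_one_iff]
    nlinarith [sq_nonneg x]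
  nlinarith [Real.sqrt_nonneg (2 * π), inv_nonneg.mpr (Real.sqrt_nonneg (2 * π))]

lemma aux_tail_small {s : ℝ} (hs : -1/6 ≤ s) :
    gaussianReal 0 1 (Ici s) ≤ ENNReal.ofReal (1/2 + (Real.sqrt (2 * π))⁻¹ * (1/6)) := by
  have hsub : Ici s ⊆ Ici (0:ℝ) ∪ Ico (-1/6) 0 := by
    intro y hy
    rcases le_or_gt 0 y with h | h
    · exact Or.inl h
    · exact Or.inr ⟨le_trans hs hy, h⟩
  have h1 : gaussianReal 0 1 (Ico (-1/6 : ℝ) 0) ≤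
      ENNReal.ofReal ((Real.sqrt (2 * π))⁻¹) * ENNReal.ofReal (1/6) := by
    rw [gaussianReal_apply 0 one_ne_zero]
    calc ∫⁻ x in Ico (-1/6 : ℝ) 0, gaussianPDF 0 1 x
        ≤ ∫⁻ _ in Ico (-1/6 : ℝ) 0, ENNReal.ofReal ((Real.sqrt (2 * π))⁻¹) :=
          lintegral_mono (fun x => ENNReal.ofReal_le_ofReal (aux_pdf_le x))
      _ = ENNReal.ofReal ((Real.sqrt (2 * π))⁻¹) * volume (Ico (-1/6 : ℝ) 0) :=
          setLIntegral_const _ _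
      _ = ENNReal.ofReal ((Real.sqrt (2 * π))⁻¹) * ENNReal.ofReal (1/6) := by
          rw [Real.volume_Ico]; norm_num
  calc gaussianReal 0 1 (Ici s) ≤ gaussianReal 0 1 (Ici (0:ℝ) ∪ Ico (-1/6) 0) :=
        measure_mono hsub
    _ ≤ gaussianReal 0 1 (Ici (0:ℝ)) + gaussianReal 0 1 (Ico (-1/6 : ℝ) 0) := measure_union_le _ _
    _ ≤ 2⁻¹ + ENNReal.ofReal ((Real.sqrt (2 * π))⁻¹) * ENNReal.ofReal (1/6) := by
        rw [aux_gauss_Ici_zero]; exact add_le_add le_rfl h1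
    _ = ENNReal.ofReal (1/2 + (Real.sqrt (2 * π))⁻¹ * (1/6)) := by
        rw [← ENNReal.ofReal_mul (by positivity), ENNReal.ofReal_add (by norm_num) (by positivity)]
        congr 1
        rw [show ((2:ℝ≥0∞))⁻¹ = 1/2 by rw [one_div]]
        rw [ENNReal.ofReal_div_of_pos (by norm_num)]
        norm_num

lemma aux_integrable_id_mul : Integrable (fun x : ℝ => x * rexp (-x ^ 2 / 2)) := by
  have := integrable_mul_exp_neg_mul_sq (b := (1:ℝ)/2) (by norm_num)
  apply this.congr
  filter_upwards with x
  ring_nf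

lemma aux_tail_bound {s : ℝ} (hs : 0 < s) :
    gaussianReal 0 1 (Ici s) ≤
      ENNReal.ofReal ((Real.sqrt (2 * π))⁻¹ * s⁻¹ * rexp (-s ^ 2 / 2)) := by
  rw [gaussianReal_apply_eq_integral 0 one_ne_zero]
  apply ENNReal.ofReal_le_ofReal
  have h1 : ∫ x in Ici s, gaussianPDFReal 0 1 x ≤
      ∫ x in Ici s, ((Real.sqrt (2 * π))⁻¹ * s⁻¹) * (x * rexp (-x ^ 2 / 2)) := by
    apply setIntegral_mono_on
    · exact (integrable_gaussianPDFReal 0 1).integrableOn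
    · exact (aux_integrable_id_mul.const_mul _).integrableOn
    · exact measurableSet_Ici
    · intro x hx
      rw [aux_std_pdf]
      have hx' : s ≤ x := hx
      have h2 : 1 ≤ s⁻¹ * x := by
        rw [← div_eq_inv_mul, le_div_iff₀ hs]
        linarith
      have h3 : 0 < rexp (-x ^ 2 / 2) := Real.exp_pos _
      have h4 : (0:ℝ) ≤ (Real.sqrt (2 * π))⁻¹ := by positivity
      nlinarith [mul_le_mul_of_nonneg_left h2 (mul_nonneg h4 h3.le)]
  refine h1.trans ?_
  rw [integral_const_mul, integral_Ici_eq_integral_Ioi, aux_integral_Ioi]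

lemma aux_second_moment (m : ℝ) {w : ℝ≥0} (hw : w ≠ 0) :
    ∫ x : ℝ, (x - m) ^ 2 * gaussianPDFReal m w x = w := by
  have hw' : (0:ℝ) < w := by
    have := pos_iff_ne_zero.mpr hw
    exact_mod_cast this
  have hpdf : ∀ x : ℝ, gaussianPDFReal m w x = gaussianPDFReal 0 w (x - m) := by
    intro x; simp [gaussianPDFReal]
  have hstep : ∫ x : ℝ, (x - m) ^ 2 * gaussianPDFReal m w x
      = ∫ y : ℝ, y ^ 2 * gaussianPDFReal 0 w y := by
    have h := integral_sub_right_eq_self (μ := volume)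
      (fun y : ℝ => y ^ 2 * gaussianPDFReal 0 w y) m
    rw [← h]
    congr 1
    funext x
    rw [hpdf]
  rw [hstep]
  have hb : (0:ℝ) < (2 * (w:ℝ))⁻¹ := by positivity
  have hform : (fun y : ℝ => y ^ 2 * gaussianPDFReal 0 w y)
      = fun y : ℝ => (Real.sqrt (2 * π * (w:ℝ)))⁻¹ * (y ^ 2 * rexp (-(2 * (w:ℝ))⁻¹ * y ^ 2)) := by
    funext y
    rw [gaussianPDFReal]
    have : -(y - 0) ^ 2 / (2 * (w:ℝ)) = -(2 * (w:ℝ))⁻¹ * y ^ 2 := by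
      field_simp
      ring
    rw [this]; ring
  rw [hform, integral_const_mul, aux_integral_sq_exp hb]
  rw [show π / ((2 * (w:ℝ))⁻¹) = 2 * π * (w:ℝ) by field_simp]
  rw [show ((2 : ℝ) * (2 * (w:ℝ))⁻¹)⁻¹ = (w:ℝ) by field_simp]
  have hsq : (0:ℝ) < Real.sqrt (2 * π * (w:ℝ)) := Real.sqrt_pos.mpr (by positivity)
  field_simp

lemma aux_sqrt_2pi : (5/2 : ℝ) ≤ Real.sqrt (2 * π) ∧ (0:ℝ) < Real.sqrt (2 * π) := by
  constructor
  · rw [show (5/2:ℝ) = Real.sqrt ((5/2)^2) by rw [Real.sqrt_sq]; norm_num]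
    apply Real.sqrt_le_sqrt
    nlinarith [Real.pi_gt_d6]
  · positivity

lemma aux_log54 : (1/5 : ℝ) ≤ Real.log (1.25 : ℝ) := by
  have h := Real.log_le_sub_one_of_pos (show (0:ℝ) < 4/5 by norm_num)
  have h2 : Real.log ((4:ℝ)/5) = - Real.log (1.25) := by
    rw [show ((4:ℝ)/5) = (1.25)⁻¹ by norm_num, Real.log_inv]
  rw [h2] at h
  linarith

set_option maxHeartbeats 1000000 in
lemma aux_key_tail {ε δ : ℝ} (hε0 : 0 < ε) (hε1 : ε < 1) (hδ0 : 0 < δ) (hδ1 : δ < 1) :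
    gaussianReal 0 1 (Ici (Real.sqrt (2 * Real.log (1.25/δ))
      - ε / (2 * Real.sqrt (2 * Real.log (1.25/δ))))) ≤ ENNReal.ofReal δ := by
  obtain ⟨hs1, hs2⟩ := aux_sqrt_2pi
  have hinv : (Real.sqrt (2 * π))⁻¹ ≤ 2/5 := by
    rw [show (2/5 : ℝ) = (5/2)⁻¹ by norm_num]
    exact inv_anti₀ (by norm_num) hs1
  set c := Real.log (1.25/δ) with hcdef
  have hc5 : 1/5 ≤ c := by
    refine le_trans aux_log54 ?_
    rw [hcdef]
    apply Real.log_le_log (by norm_num)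
    rw [le_div_iff₀ hδ0]
    nlinarith
  have hcpos : 0 < c := by linarith
  set u := Real.sqrt (2 * c) with hudef
  have hu2 : u ^ 2 = 2 * c := Real.sq_sqrt (by linarith)
  have hupos : 0 < u := Real.sqrt_pos.mpr (by linarith)
  set sL := u - ε / (2 * u) with hsLdef
  clear_value c u sL
  have hu35 : 3/5 ≤ u := by nlinarith
  have hεu : ε / (2 * u) ≤ 1 / (2 * u) :=
    (div_le_div_iff_of_pos_right (by positivity)).mpr hε1.le
  by_cases hcase : c ≤ Real.log 2
  · -- small c, δ ≥ 5/8
    have hδ58 : 5/8 ≤ δ := by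
      have h1 : (1.25:ℝ)/δ ≤ 2 := by
        have h2 := Real.exp_le_exp.mpr hcase
        rw [hcdef] at h2
        rwa [Real.exp_log (by positivity), Real.exp_log (by norm_num)] at h2
      rw [div_le_iff₀ hδ0] at h1
      linarith
    have hsL : -1/6 ≤ sL := by
      have h2 : 1 / (2 * u) ≤ u + 1/6 := by
        rw [div_le_iff₀ (by linarith)]
        nlinarith
      rw [hsLdef]
      linarith
    refine (aux_tail_small hsL).trans (ENNReal.ofReal_le_ofReal ?_)
    nlinarith
  · -- large c: use the sharp tail bound
    push_neg at hcase
    have hlog2 : (6931/10000 : ℝ) ≤ Real.log 2 := by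
      have := Real.log_two_gt_d9; linarith
    have hu117 : (117/100:ℝ) ≤ u := by nlinarith
    have h1u : 1 / (2 * u) ≤ 1 / (2 * (117/100)) := by gcongr <;> norm_num
    have hsL74 : (37/50:ℝ) ≤ sL := by
      rw [hsLdef]
      have := hεu.trans h1u
      norm_num at this ⊢
      linarith
    have hsLpos : 0 < sL := by linarith
    refine (aux_tail_bound hsLpos).trans (ENNReal.ofReal_le_ofReal ?_)
    have hδeq : δ = 1.25 * rexp (-c) := by
      have h1 : rexp c = 1.25 / δ := by rw [hcdef]; exact Real.exp_log (by positivity)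
      rw [Real.exp_neg, h1]
      field_simp
    have hsLsq : u ^ 2 - 1 ≤ sL ^ 2 := by
      have hcc : u * (ε / (2 * u)) = ε / 2 := by field_simp
      rw [hsLdef]
      nlinarith [sq_nonneg (ε / (2 * u))]
    have hexp : rexp (-sL ^ 2 / 2) ≤ rexp (1/2) * rexp (-c) := by
      rw [← Real.exp_add]
      apply Real.exp_le_exp.mpr
      linarith
    have hexphalf : rexp (1/2 : ℝ) ≤ 33/20 := by
      have hsq : rexp (1/2:ℝ) * rexp (1/2:ℝ) = rexp 1 := by
        rw [← Real.exp_add]; norm_num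
      nlinarith [Real.exp_one_lt_d9, Real.exp_pos (1/2:ℝ)]
    have hsLinv : sL⁻¹ ≤ (37/50:ℝ)⁻¹ := inv_anti₀ (by norm_num) hsL74
    have he : rexp (-sL ^ 2 / 2) ≤ (33/20) * rexp (-c) := by
      refine hexp.trans ?_
      have := Real.exp_pos (-c)
      nlinarith
    have hch : (Real.sqrt (2 * π))⁻¹ * sL⁻¹ * rexp (-sL ^ 2 / 2)
        ≤ ((2/5) * (37/50:ℝ)⁻¹) * ((33/20) * rexp (-c)) := by
      refine mul_le_mul (mul_le_mul hinv hsLinv (by positivity) (by norm_num)) he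
        (by positivity) (by positivity)
    refine hch.trans ?_
    rw [hδeq]
    nlinarith [Real.exp_pos (-c)]

lemma aux_halfline {t b : ℝ} (hb : b ≠ 0) :
    gaussianReal 0 1 {y | t < b * y} = gaussianReal 0 1 (Ioi (t / |b|)) := by
  rcases hb.lt_or_gt with hbneg | hbpos
  · have hset : {y : ℝ | t < b * y} = (fun y : ℝ => -y) ⁻¹' (Ioi (t / |b|)) := by
      ext y
      simp only [mem_setOf_eq, mem_preimage, mem_Ioi, abs_of_neg hbneg]
      rw [div_lt_iff₀ (by linarith : (0:ℝ) < -b)]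
      constructor <;> intro h <;> nlinarith
    rw [hset, aux_gauss_symm measurableSet_Ioi]
  · have hset : {y : ℝ | t < b * y} = Ioi (t / |b|) := by
      ext y
      simp only [mem_setOf_eq, mem_Ioi, abs_of_pos hbpos]
      rw [div_lt_iff₀ hbpos]
      constructor <;> intro h <;> nlinarith
    rw [hset]

lemma aux_ratio {ε L c vv m : ℝ} (hε0 : 0 < ε) (hL : 0 < L) (hc : 0 < c)
    (hv : vv = 2 * L ^ 2 * c / ε ^ 2) (hm0 : 0 < m) (hmL : m ≤ L) :
    Real.sqrt (2 * c) - ε / (2 * Real.sqrt (2 * c))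
      ≤ (vv * ε - m ^ 2 / 2) / (m * Real.sqrt vv) := by
  have hvpos : 0 < vv := by rw [hv]; positivity
  have hu2 : Real.sqrt (2 * c) ^ 2 = 2 * c := Real.sq_sqrt (by linarith)
  have hupos : 0 < Real.sqrt (2 * c) := Real.sqrt_pos.mpr (by linarith)
  have hsv : Real.sqrt vv = L * Real.sqrt (2 * c) / ε := by
    rw [show vv = (L * Real.sqrt (2 * c) / ε) ^ 2 by
      rw [div_pow, mul_pow, hu2, hv]; ring]
    exact Real.sqrt_sq (by positivity)
  have hclaim2 : (vv * ε - L ^ 2 / 2) / (L * Real.sqrt vv)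
      = Real.sqrt (2 * c) - ε / (2 * Real.sqrt (2 * c)) := by
    rw [hsv, show vv = L ^ 2 * Real.sqrt (2 * c) ^ 2 / ε ^ 2 by rw [hu2, hv]; ring]
    field_simp
  rw [← hclaim2]
  rw [div_le_div_iff₀ (by positivity) (by positivity)]
  have hstep : (vv * ε - L ^ 2 / 2) * m ≤ (vv * ε - m ^ 2 / 2) * L := by
    nlinarith [mul_nonneg (sub_nonneg.mpr hmL) (mul_pos hvpos hε0).le,
      mul_nonneg (mul_nonneg hm0.le hL.le) (sub_nonneg.mpr hmL)]
  nlinarith [mul_le_mul_of_nonneg_right hstep (Real.sqrt_nonneg vv)]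

set_option maxHeartbeats 1000000 in
lemma aux_dp {ε δ L : ℝ} (hε0 : 0 < ε) (hε1 : ε < 1) (hδ0 : 0 < δ) (hδ1 : δ < 1) (hL : 0 < L)
    (σsq : ℝ≥0) (hσsq : (σsq : ℝ) = 2 * L ^ 2 * Real.log (1.25 / δ) / ε ^ 2) :
    ∀ z z' : ℝ, |z - z'| ≤ L → ∀ S : Set ℝ, MeasurableSet S →
      gaussianReal z σsq S ≤
        ENNReal.ofReal (Real.exp ε) * gaussianReal z' σsq S + ENNReal.ofReal δ := by
  have hc5 : 1/5 ≤ Real.log (1.25/δ) := by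
    refine le_trans aux_log54 ?_
    apply Real.log_le_log (by norm_num)
    rw [le_div_iff₀ hδ0]
    nlinarith
  have hcpos : 0 < Real.log (1.25/δ) := by linarith
  have hvpos : 0 < (σsq : ℝ) := by rw [hσsq]; positivity
  have hσne : σsq ≠ 0 := by
    intro h
    rw [h] at hvpos
    simp at hvpos
  intro z z' hzz' S hS
  set a := z' - z with hadef
  set t := (σsq : ℝ) * ε - a ^ 2 / 2 with htdef
  set A := {x : ℝ | -a * (x - z) ≤ t} with hAdef
  have hAmeas : MeasurableSet A :=
    measurableSet_le (((measurable_id.sub_const z).const_mul (-a)).comp measurable_id)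
      measurable_const
  clear_value a t A
  -- pointwise density inequality on A
  have hpt : ∀ x ∈ A, gaussianPDF z σsq x ≤ ENNReal.ofReal (Real.exp ε) * gaussianPDF z' σsq x := by
    intro x hx
    rw [gaussianPDF, gaussianPDF, ← ENNReal.ofReal_mul (Real.exp_nonneg ε)]
    apply ENNReal.ofReal_le_ofReal
    have hxA : -a * (x - z) ≤ t := by rw [hAdef] at hx; exact hx
    rw [htdef] at hxA
    have h2 : (x - z') ^ 2 - (x - z) ^ 2 ≤ 2 * (σsq : ℝ) * ε := by
      have hza : z' = z + a := by rw [hadef]; ring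
      rw [hza]
      nlinarith
    have h3 : ((x - z') ^ 2 - (x - z) ^ 2) / (2 * (σsq : ℝ)) ≤ ε := by
      rw [div_le_iff₀ (by positivity)]
      linarith
    rw [sub_div] at h3
    have hkey : -(x - z) ^ 2 / (2 * (σsq : ℝ)) ≤ ε + (-(x - z') ^ 2 / (2 * (σsq : ℝ))) := by
      have e1 : -(x - z) ^ 2 / (2 * (σsq : ℝ)) = -((x - z) ^ 2 / (2 * (σsq : ℝ))) := by ring
      have e2 : -(x - z') ^ 2 / (2 * (σsq : ℝ)) = -((x - z') ^ 2 / (2 * (σsq : ℝ))) := by ring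
      rw [e1, e2]
      linarith
    have hexp : rexp (-(x - z) ^ 2 / (2 * (σsq : ℝ)))
        ≤ rexp ε * rexp (-(x - z') ^ 2 / (2 * (σsq : ℝ))) := by
      rw [← Real.exp_add]
      exact Real.exp_le_exp.mpr hkey
    rw [gaussianPDFReal, gaussianPDFReal]
    have hs : (0:ℝ) ≤ (Real.sqrt (2 * π * (σsq : ℝ)))⁻¹ := by positivity
    calc (Real.sqrt (2 * π * (σsq : ℝ)))⁻¹ * rexp (-(x - z) ^ 2 / (2 * (σsq : ℝ)))
        ≤ (Real.sqrt (2 * π * (σsq : ℝ)))⁻¹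
            * (rexp ε * rexp (-(x - z') ^ 2 / (2 * (σsq : ℝ)))) :=
          mul_le_mul_of_nonneg_left hexp hs
      _ = rexp ε * ((Real.sqrt (2 * π * (σsq : ℝ)))⁻¹
            * rexp (-(x - z') ^ 2 / (2 * (σsq : ℝ)))) := by ring
  -- main split
  have h1 : gaussianReal z σsq S ≤ gaussianReal z σsq (S ∩ A) + gaussianReal z σsq Aᶜ := by
    refine le_trans (measure_mono (show S ⊆ (S ∩ A) ∪ Aᶜ from ?_)) (measure_union_le _ _)
    intro x hx
    by_cases hxa : x ∈ A
    · exact Or.inl ⟨hx, hxa⟩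
    · exact Or.inr hxa
  have h2 : gaussianReal z σsq (S ∩ A) ≤ ENNReal.ofReal (Real.exp ε) * gaussianReal z' σsq S := by
    rw [gaussianReal_apply z hσne]
    calc ∫⁻ x in S ∩ A, gaussianPDF z σsq x
        ≤ ∫⁻ x in S ∩ A, ENNReal.ofReal (Real.exp ε) * gaussianPDF z' σsq x :=
          setLIntegral_mono ((measurable_gaussianPDF z' σsq).const_mul _)
            (fun x hx => hpt x hx.2)
      _ = ENNReal.ofReal (Real.exp ε) * ∫⁻ x in S ∩ A, gaussianPDF z' σsq x :=
          lintegral_const_mul _ (measurable_gaussianPDF z' σsq)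
      _ = ENNReal.ofReal (Real.exp ε) * gaussianReal z' σsq (S ∩ A) := by
          rw [gaussianReal_apply z' hσne]
      _ ≤ ENNReal.ofReal (Real.exp ε) * gaussianReal z' σsq S :=
          mul_le_mul_right (measure_mono inter_subset_left) _
  have h3 : gaussianReal z σsq Aᶜ ≤ ENNReal.ofReal δ := by
    by_cases ha : a = 0
    · have hAempty : Aᶜ = (∅ : Set ℝ) := by
        ext x
        simp only [mem_compl_iff, mem_setOf_eq, hAdef, not_le, mem_empty_iff_false, iff_false,
          not_lt, ha]
        rw [htdef, ha]
        nlinarith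
      rw [hAempty]
      simp
    · -- map to the standard gaussian
      have hmap1 : gaussianReal z σsq = Measure.map (· + z) (gaussianReal 0 σsq) := by
        rw [gaussianReal_map_add_const (μ := 0) (v := σsq) z, zero_add]
      have hA : gaussianReal z σsq Aᶜ = gaussianReal 0 σsq {y | t < -a * y} := by
        rw [hmap1, Measure.map_apply (measurable_add_const z) hAmeas.compl]
        congr 1
        ext y
        simp only [mem_preimage, mem_compl_iff, mem_setOf_eq, hAdef, not_le, add_sub_cancel_right]
      have hmap2 : gaussianReal 0 σsq
          = Measure.map (fun y => Real.sqrt (σsq : ℝ) * y) (gaussianReal 0 1) := by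
        have h := gaussianReal_map_const_mul (μ := (0:ℝ)) (v := 1) (Real.sqrt (σsq : ℝ))
        rw [mul_zero] at h
        have heq : (NNReal.mk ((Real.sqrt (σsq : ℝ)) ^ 2) (sq_nonneg _)) * 1 = σsq := by
          ext
          simp [Real.sq_sqrt hvpos.le]
        rw [heq] at h
        exact h.symm
      have hsetmeas : MeasurableSet {y : ℝ | t < -a * y} :=
        measurableSet_lt measurable_const (measurable_id.const_mul _)
      have hA2 : gaussianReal 0 σsq {y | t < -a * y}
          = gaussianReal 0 1 {y | t < (-a * Real.sqrt (σsq : ℝ)) * y} := by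
        rw [hmap2, Measure.map_apply (measurable_const_mul _) hsetmeas]
        congr 1
        ext y
        simp only [mem_preimage, mem_setOf_eq, mul_assoc]
      have hsv0 : 0 < Real.sqrt (σsq : ℝ) := Real.sqrt_pos.mpr hvpos
      have hb0 : -a * Real.sqrt (σsq : ℝ) ≠ 0 :=
        mul_ne_zero (neg_ne_zero.mpr ha) (ne_of_gt hsv0)
      have hbabs : |(-a * Real.sqrt (σsq : ℝ))| = |a| * Real.sqrt (σsq : ℝ) := by
        rw [abs_mul, abs_neg, abs_of_nonneg (Real.sqrt_nonneg _)]
      have hm0 : 0 < |a| := abs_pos.mpr ha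
      have hmL : |a| ≤ L := by
        rw [hadef, abs_sub_comm]
        exact hzz'
      have hsL_le : Real.sqrt (2 * Real.log (1.25/δ))
          - ε / (2 * Real.sqrt (2 * Real.log (1.25/δ)))
          ≤ t / |(-a * Real.sqrt (σsq : ℝ))| := by
        rw [hbabs, htdef, show a ^ 2 = |a| ^ 2 from (sq_abs a).symm]
        exact aux_ratio hε0 hL hcpos hσsq hm0 hmL
      calc gaussianReal z σsq Aᶜ
          = gaussianReal 0 1 (Ioi (t / |(-a * Real.sqrt (σsq : ℝ))|)) := by
            rw [hA, hA2, aux_halfline hb0]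
        _ ≤ gaussianReal 0 1 (Ici (Real.sqrt (2 * Real.log (1.25/δ))
              - ε / (2 * Real.sqrt (2 * Real.log (1.25/δ))))) := by
            apply measure_mono
            intro y hy
            exact le_trans hsL_le (le_of_lt hy)
        _ ≤ ENNReal.ofReal δ := aux_key_tail hε0 hε1 hδ0 hδ1
  calc gaussianReal z σsq S ≤ gaussianReal z σsq (S ∩ A) + gaussianReal z σsq Aᶜ := h1
    _ ≤ ENNReal.ofReal (Real.exp ε) * gaussianReal z' σsq S + ENNReal.ofReal δ :=
        add_le_add h2 h3

lemma aux_integrable_sq_pdf (m : ℝ) {w : ℝ≥0} (hw : w ≠ 0) :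
    Integrable (fun x : ℝ => (x - m) ^ 2 * gaussianPDFReal m w x) := by
  have hw' : (0:ℝ) < w := by
    have := pos_iff_ne_zero.mpr hw
    exact_mod_cast this
  have hb : (0:ℝ) < (2 * (w:ℝ))⁻¹ := by positivity
  have h0 : Integrable (fun y : ℝ => y ^ 2 * gaussianPDFReal 0 w y) := by
    have h1 := (aux_integrable_sq_exp hb).const_mul (Real.sqrt (2 * π * (w:ℝ)))⁻¹
    apply h1.congr
    filter_upwards with y
    rw [gaussianPDFReal]
    have : -(y - 0) ^ 2 / (2 * (w:ℝ)) = -(2 * (w:ℝ))⁻¹ * y ^ 2 := by field_simp; ring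
    rw [this]
    ring
  have h2 := h0.comp_sub_right m
  apply h2.congr
  filter_upwards with x
  beta_reduce
  congr 1
  simp [gaussianPDFReal]

lemma aux_kl {σ₁ : ℝ} (hσ₁ : 0 < σ₁) (σsq : ℝ≥0) (hσpos : 0 < (σsq : ℝ)) (μ₁ : ℝ) :
    InformationTheory.klDiv' (gaussianReal μ₁ (⟨σ₁ ^ 2, sq_nonneg σ₁⟩ + σsq))
        (gaussianReal μ₁ ⟨σ₁ ^ 2, sq_nonneg σ₁⟩) ≤
      ENNReal.ofReal ((σsq : ℝ) / (2 * σ₁ ^ 2)) := by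
  set s : ℝ≥0 := ⟨σ₁ ^ 2, sq_nonneg σ₁⟩ with hsdef
  set w : ℝ≥0 := s + σsq with hwdef
  have hsR : (s : ℝ) = σ₁ ^ 2 := rfl
  have hwR : (w : ℝ) = σ₁ ^ 2 + (σsq : ℝ) := by rw [hwdef, NNReal.coe_add, hsR]
  have hsR0 : (0:ℝ) < s := by rw [hsR]; positivity
  have hwR0 : (0:ℝ) < w := by rw [hwR]; positivity
  have hs : s ≠ 0 := by
    intro h; rw [h] at hsR0; simp at hsR0
  have hw : w ≠ 0 := by
    intro h; rw [h] at hwR0; simp at hwR0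
  have hslew : (s : ℝ) ≤ (w : ℝ) := by rw [hsR, hwR]; linarith
  have h_ac : gaussianReal μ₁ w ≪ gaussianReal μ₁ s :=
    (gaussianReal_absolutelyContinuous μ₁ hw).trans (gaussianReal_absolutelyContinuous' μ₁ hs)
  set C : ℝ := Real.log ((s : ℝ) / (w : ℝ)) / 2 with hCdef
  set D : ℝ := 1 / (2 * (s : ℝ)) - 1 / (2 * (w : ℝ)) with hDdef
  set g : ℝ → ℝ := fun x => C + D * (x - μ₁) ^ 2 with hgdef
  -- pointwise formula for the log-ratio
  have hr : ∀ x : ℝ, Real.log (gaussianPDFReal μ₁ w x / gaussianPDFReal μ₁ s x) = g x := by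
    intro x
    have hpw : Real.log (gaussianPDFReal μ₁ w x)
        = -(Real.log (2 * π * (w:ℝ))) / 2 + (-(x - μ₁) ^ 2 / (2 * (w:ℝ))) := by
      rw [gaussianPDFReal, Real.log_mul (by positivity) (Real.exp_ne_zero _), Real.log_exp,
        Real.log_inv, Real.log_sqrt (by positivity)]
      ring
    have hps : Real.log (gaussianPDFReal μ₁ s x)
        = -(Real.log (2 * π * (s:ℝ))) / 2 + (-(x - μ₁) ^ 2 / (2 * (s:ℝ))) := by
      rw [gaussianPDFReal, Real.log_mul (by positivity) (Real.exp_ne_zero _), Real.log_exp,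
        Real.log_inv, Real.log_sqrt (by positivity)]
      ring
    rw [Real.log_div (gaussianPDFReal_pos μ₁ w x hw).ne' (gaussianPDFReal_pos μ₁ s x hs).ne',
      hpw, hps, hgdef]
    beta_reduce
    rw [hCdef, hDdef,
      show Real.log (2 * π * (w:ℝ)) = Real.log (2 * π) + Real.log (w:ℝ) from
        Real.log_mul (by positivity) hwR0.ne',
      show Real.log (2 * π * (s:ℝ)) = Real.log (2 * π) + Real.log (s:ℝ) from
        Real.log_mul (by positivity) hsR0.ne',
      Real.log_div hsR0.ne' hwR0.ne']
    ring
  -- rnDeriv and llr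
  have h_rn : (gaussianReal μ₁ w).rnDeriv (gaussianReal μ₁ s)
      =ᵐ[volume] fun x => (gaussianPDF μ₁ s x)⁻¹ * gaussianPDF μ₁ w x := by
    rw [gaussianReal_of_var_ne_zero μ₁ hs]
    have h := Measure.rnDeriv_withDensity_right (gaussianReal μ₁ w) volume
      (f := gaussianPDF μ₁ s) (measurable_gaussianPDF _ _).aemeasurable
      (ae_of_all _ fun x => (gaussianPDF_pos _ hs _).ne')
      (ae_of_all _ fun x => ENNReal.ofReal_ne_top)
    filter_upwards [h, rnDeriv_gaussianReal μ₁ w] with x hx1 hx2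
    rw [hx1, hx2]
  have h_llr_vol : llr (gaussianReal μ₁ w) (gaussianReal μ₁ s) =ᵐ[volume] g := by
    filter_upwards [h_rn] with x hx
    rw [llr, hx, ← hr x]
    congr 1
    rw [gaussianPDF, gaussianPDF, ← ENNReal.ofReal_inv_of_pos (gaussianPDFReal_pos μ₁ s x hs),
      ← ENNReal.ofReal_mul (inv_nonneg.mpr (gaussianPDFReal_nonneg μ₁ s x)),
      ENNReal.toReal_ofReal
        (mul_nonneg (inv_nonneg.mpr (gaussianPDFReal_nonneg μ₁ s x))
          (gaussianPDFReal_nonneg μ₁ w x))]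
    rw [inv_mul_eq_div]
  have h_llr : llr (gaussianReal μ₁ w) (gaussianReal μ₁ s) =ᵐ[gaussianReal μ₁ w] g :=
    (gaussianReal_absolutelyContinuous μ₁ hw).ae_eq h_llr_vol
  -- integrability of g
  have hpdf_nn : ∀ x : ℝ, gaussianPDF μ₁ w x
      = (((gaussianPDFReal μ₁ w x).toNNReal : ℝ≥0) : ℝ≥0∞) := fun x => rfl
  have hmeasnn : Measurable fun x => (gaussianPDFReal μ₁ w x).toNNReal :=
    (measurable_gaussianPDFReal μ₁ w).real_toNNReal
  have hgw_eq : gaussianReal μ₁ w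
      = volume.withDensity (fun x => (((gaussianPDFReal μ₁ w x).toNNReal : ℝ≥0) : ℝ≥0∞)) := by
    rw [gaussianReal_of_var_ne_zero μ₁ hw]
    rfl
  have h_int_real : Integrable (fun x => gaussianPDFReal μ₁ w x * g x) volume := by
    have h1 : Integrable (fun x => C * gaussianPDFReal μ₁ w x
        + D * ((x - μ₁) ^ 2 * gaussianPDFReal μ₁ w x)) volume :=
      ((integrable_gaussianPDFReal μ₁ w).const_mul C).add
        ((aux_integrable_sq_pdf μ₁ hw).const_mul D)
    apply h1.congr
    filter_upwards with x
    rw [hgdef]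
    ring
  have h_int_g : Integrable g (gaussianReal μ₁ w) := by
    rw [hgw_eq]
    rw [integrable_withDensity_iff_integrable_smul hmeasnn]
    apply h_int_real.congr
    filter_upwards with x
    rw [NNReal.smul_def, smul_eq_mul, Real.coe_toNNReal _ (gaussianPDFReal_nonneg μ₁ w x)]
  have h_int_llr : Integrable (llr (gaussianReal μ₁ w) (gaussianReal μ₁ s))
      (gaussianReal μ₁ w) := h_int_g.congr h_llr.symm
  -- value of the integral
  have h_integral : ∫ x, g x ∂(gaussianReal μ₁ w) = C + D * (w : ℝ) := by
    rw [hgw_eq, integral_withDensity_eq_integral_smul hmeasnn g]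
    have hsmul : (fun x => ((gaussianPDFReal μ₁ w x).toNNReal : ℝ≥0) • g x)
        = fun x => C * gaussianPDFReal μ₁ w x
            + D * ((x - μ₁) ^ 2 * gaussianPDFReal μ₁ w x) := by
      funext x
      rw [NNReal.smul_def, smul_eq_mul, Real.coe_toNNReal _ (gaussianPDFReal_nonneg μ₁ w x),
        hgdef]
      ring
    rw [hsmul, integral_add (((integrable_gaussianPDFReal μ₁ w).const_mul C))
      ((aux_integrable_sq_pdf μ₁ hw).const_mul D), integral_const_mul, integral_const_mul,
      integral_gaussianPDFReal_eq_one μ₁ hw, aux_second_moment μ₁ hw]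
    ring
  -- conclude
  rw [InformationTheory.klDiv', if_pos ⟨h_ac, h_int_llr⟩]
  have huniv_w : gaussianReal μ₁ w Set.univ = 1 := measure_univ
  have huniv_s : gaussianReal μ₁ s Set.univ = 1 := measure_univ
  rw [huniv_w, huniv_s, ENNReal.add_sub_cancel_right ENNReal.one_ne_top]
  rw [integral_congr_ae h_llr, h_integral]
  apply ENNReal.ofReal_le_ofReal
  have hC : C ≤ 0 := by
    rw [hCdef]
    have := Real.log_nonpos (by positivity) ((div_le_one hwR0).mpr hslew)
    linarith
  have hDw : D * (w : ℝ) = ((w : ℝ) - (s : ℝ)) / (2 * (s : ℝ)) := by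
    rw [hDdef]
    field_simp
  have hws : (w : ℝ) - (s : ℝ) = (σsq : ℝ) := by rw [hwR, hsR]; ring
  have hfin : D * (w : ℝ) = (σsq : ℝ) / (2 * σ₁ ^ 2) := by
    rw [hDw, hws, hsR]
  linarith [hC, hfin]

end AuxGaussianMechanism

/-- With noise variance `σ² = 2L²log(1.25/δ)/ε²`: (a) the one-dimensional Gaussian mechanism is
`(ε, δ)`-differentially private for sensitivity `L`, and (b) its KL distortion on a Gaussian
latent `N(μ₁, σ₁²)` is at most `L²log(1.25/δ)/(ε²σ₁²)`; consequently, any distortion budget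
`b ≥ L²log(1.25/δ)/(ε²σ₁²)` admits an `(ε, δ)`-DP additive Gaussian mechanism meeting the
KL constraint `klDiv ≤ b`. -/
theorem gaussian_mechanism_dp_and_klBudget (ε δ L σ₁ : ℝ)
    (hε : ε ∈ Set.Ioo (0 : ℝ) 1) (hδ : δ ∈ Set.Ioo (0 : ℝ) 1) (hL : 0 < L) (hσ₁ : 0 < σ₁)
    (σsq : NNReal) (hσsq : (σsq : ℝ) = 2 * L ^ 2 * Real.log (1.25 / δ) / ε ^ 2) :
    ((∀ z z' : ℝ, |z - z'| ≤ L → ∀ S : Set ℝ, MeasurableSet S →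
        gaussianReal z σsq S ≤
          ENNReal.ofReal (Real.exp ε) * gaussianReal z' σsq S + ENNReal.ofReal δ) ∧
      (∀ μ₁ : ℝ,
        InformationTheory.klDiv' (gaussianReal μ₁ (⟨σ₁ ^ 2, sq_nonneg σ₁⟩ + σsq))
            (gaussianReal μ₁ ⟨σ₁ ^ 2, sq_nonneg σ₁⟩) ≤
          ENNReal.ofReal (L ^ 2 * Real.log (1.25 / δ) / (ε ^ 2 * σ₁ ^ 2)))) ∧
    ∀ b : ℝ, L ^ 2 * Real.log (1.25 / δ) / (ε ^ 2 * σ₁ ^ 2) ≤ b →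
      ((∀ z z' : ℝ, |z - z'| ≤ L → ∀ S : Set ℝ, MeasurableSet S →
          gaussianReal z σsq S ≤
            ENNReal.ofReal (Real.exp ε) * gaussianReal z' σsq S + ENNReal.ofReal δ) ∧
        ∀ μ₁ : ℝ,
          InformationTheory.klDiv' (gaussianReal μ₁ (⟨σ₁ ^ 2, sq_nonneg σ₁⟩ + σsq))
              (gaussianReal μ₁ ⟨σ₁ ^ 2, sq_nonneg σ₁⟩) ≤
            ENNReal.ofReal b) := by
  obtain ⟨hε0, hε1⟩ := hε
  obtain ⟨hδ0, hδ1⟩ := hδ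
  have hc5 : 1/5 ≤ Real.log (1.25/δ) := by
    refine le_trans aux_log54 ?_
    apply Real.log_le_log (by norm_num)
    rw [le_div_iff₀ hδ0]
    nlinarith
  have hcpos : 0 < Real.log (1.25/δ) := by linarith
  have hσpos : 0 < (σsq : ℝ) := by rw [hσsq]; positivity
  have hDP := aux_dp hε0 hε1 hδ0 hδ1 hL σsq hσsq
  have hbound : (σsq : ℝ) / (2 * σ₁ ^ 2) = L ^ 2 * Real.log (1.25 / δ) / (ε ^ 2 * σ₁ ^ 2) := by
    rw [hσsq]
    field_simp
  have hKL : ∀ μ₁ : ℝ,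
      InformationTheory.klDiv' (gaussianReal μ₁ (⟨σ₁ ^ 2, sq_nonneg σ₁⟩ + σsq))
          (gaussianReal μ₁ ⟨σ₁ ^ 2, sq_nonneg σ₁⟩) ≤
        ENNReal.ofReal (L ^ 2 * Real.log (1.25 / δ) / (ε ^ 2 * σ₁ ^ 2)) := by
    intro μ₁
    have h := aux_kl hσ₁ σsq hσpos μ₁
    rwa [hbound] at h
  exact ⟨⟨hDP, hKL⟩, fun b hb =>
    ⟨hDP, fun μ₁ => (hKL μ₁).trans (ENNReal.ofReal_le_ofReal hb)⟩⟩
end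

section
/- Let Z and Y be nonempty finite types and let q : Z × Y → ℝ be a strictly positive probability mass function (q(z,y) > 0 for all (z,y) and ∑_{z,y} q(z,y) = 1) with marginals qZ z = ∑_y q(z,y) and qY y = ∑_z q(z,y). Let p : Z → Y → ℝ satisfy p z y > 0 and ∑_y p z y = 1 for every z. Define the mutual information I = ∑_{z,y} q(z,y) · Real.log (q(z,y) / (qZ z · qY y)), the entropy H(Y) = −∑_y qY y · Real.log (qY y), and the conditional distribution q(y|z) = q(z,y)/qZ z. Then I = ∑_z qZ z · (∑_y q(y|z) · Real.log (q(y|z) / p z y)) + ∑_{z,y} q(z,y) · Real.log (p z y) + H(Y). That is, the mutual information decomposes as the expected KL divergence E_{q(z)}[KL(q(·|z) ‖ p(·|z))], plus the expected log-likelihood of the approximating conditional p, plus the entropy of Y. -/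
/-- Decomposition of mutual information: `I(Z;Y)` equals the expected KL divergence
`E_{q(z)}[KL(q(·|z) ‖ p(·|z))]`, plus the expected log-likelihood of the approximating
conditional `p`, plus the entropy `H(Y)`. -/
theorem mutualInfo_eq_expected_klDiv_add_loglik_add_entropy
    {Z Y : Type*} [Fintype Z] [Fintype Y] [Nonempty Z] [Nonempty Y]
    (q : Z × Y → ℝ) (hq : ∀ zy, 0 < q zy) (hq1 : ∑ zy : Z × Y, q zy = 1)
    (qZ : Z → ℝ) (hqZ : ∀ z, qZ z = ∑ y, q (z, y))
    (qY : Y → ℝ) (hqY : ∀ y, qY y = ∑ z, q (z, y))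
    (p : Z → Y → ℝ) (hp : ∀ z y, 0 < p z y) (hp1 : ∀ z, ∑ y, p z y = 1) :
    (∑ z, ∑ y, q (z, y) * Real.log (q (z, y) / (qZ z * qY y))) =
      (∑ z, qZ z * ∑ y, (q (z, y) / qZ z) * Real.log ((q (z, y) / qZ z) / p z y)) +
        (∑ z, ∑ y, q (z, y) * Real.log (p z y)) +
        -∑ y, qY y * Real.log (qY y) := by
  have hqZpos : ∀ z, 0 < qZ z := fun z => (hqZ z) ▸
    Finset.sum_pos (fun y _ => hq (z, y)) Finset.univ_nonempty
  have hqYpos : ∀ y, 0 < qY y := fun y => (hqY y) ▸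
    Finset.sum_pos (fun z _ => hq (z, y)) Finset.univ_nonempty
  -- KL term rewritten
  have h1 : (∑ z, qZ z * ∑ y, (q (z, y) / qZ z) * Real.log ((q (z, y) / qZ z) / p z y))
      = ∑ z, ∑ y, q (z, y) * Real.log ((q (z, y) / qZ z) / p z y) := by
    refine Finset.sum_congr rfl fun z _ => ?_
    rw [Finset.mul_sum]
    refine Finset.sum_congr rfl fun y _ => ?_
    rw [div_mul_eq_mul_div, mul_div_assoc']
    exact mul_div_cancel_left₀ _ (hqZpos z).ne'
  -- entropy term rewritten
  have h2 : (∑ y, qY y * Real.log (qY y)) = ∑ z, ∑ y, q (z, y) * Real.log (qY y) := by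
    rw [Finset.sum_comm]
    refine Finset.sum_congr rfl fun y _ => ?_
    rw [hqY y, Finset.sum_mul]
  rw [h1, h2, ← Finset.sum_neg_distrib, ← Finset.sum_add_distrib, ← Finset.sum_add_distrib]
  refine Finset.sum_congr rfl fun z _ => ?_
  rw [← Finset.sum_neg_distrib, ← Finset.sum_add_distrib, ← Finset.sum_add_distrib]
  refine Finset.sum_congr rfl fun y _ => ?_
  have hqzy := hq (z, y)
  rw [← mul_neg, ← mul_add, ← mul_add]
  congr 1
  rw [Real.log_div (div_pos hqzy (hqZpos z)).ne' (hp z y).ne',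
    Real.log_div hqzy.ne' (mul_pos (hqZpos z) (hqYpos y)).ne',
    Real.log_mul (hqZpos z).ne' (hqYpos y).ne',
    Real.log_div hqzy.ne' (hqZpos z).ne']
  ring
end

section
/- Let Z and Y be nonempty finite types and let q : Z × Y → ℝ be a strictly positive probability mass function with marginals qZ z = ∑_y q(z,y) and qY y = ∑_z q(z,y). Let p : Z → Y → ℝ satisfy p z y > 0 and ∑_y p z y = 1 for every z. Then the mutual information I = ∑_{z,y} q(z,y) · Real.log (q(z,y) / (qZ z · qY y)) satisfies I ≥ ∑_{z,y} q(z,y) · Real.log (p z y) + H(Y), where H(Y) = −∑_y qY y · Real.log (qY y). Equivalently, I(Z;Y) ≥ H(Y) − H(q, p) where H(q, p) = −∑_{z,y} q(z,y)·log(p z y) is the cross-entropy loss of the classifier p. -/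
/-- Variational lower bound on mutual information:
`I(Z;Y) ≥ E_q[log p(y|z)] + H(Y)`, i.e. `I(Z;Y) ≥ H(Y) − H(q, p)` where `H(q, p)` is the
cross-entropy loss of the classifier `p`. -/
theorem mutualInfo_ge_loglik_add_entropy
    {Z Y : Type*} [Fintype Z] [Fintype Y] [Nonempty Z] [Nonempty Y]
    (q : Z × Y → ℝ) (hq : ∀ zy, 0 < q zy) (hq1 : ∑ zy : Z × Y, q zy = 1)
    (qZ : Z → ℝ) (hqZ : ∀ z, qZ z = ∑ y, q (z, y))
    (qY : Y → ℝ) (hqY : ∀ y, qY y = ∑ z, q (z, y))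
    (p : Z → Y → ℝ) (hp : ∀ z y, 0 < p z y) (hp1 : ∀ z, ∑ y, p z y = 1) :
    (∑ z, ∑ y, q (z, y) * Real.log (q (z, y) / (qZ z * qY y))) ≥
      (∑ z, ∑ y, q (z, y) * Real.log (p z y)) + -∑ y, qY y * Real.log (qY y) := by
  have hqZpos : ∀ z, 0 < qZ z := fun z => by
    rw [hqZ]; exact Finset.sum_pos (fun y _ => hq _) Finset.univ_nonempty
  have hqYpos : ∀ y, 0 < qY y := fun y => by
    rw [hqY]; exact Finset.sum_pos (fun z _ => hq _) Finset.univ_nonempty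
  have key : ∀ z y, q (z, y) - qZ z * p z y ≤
      q (z, y) * Real.log (q (z, y) / (qZ z * qY y))
        - (q (z, y) * Real.log (p z y) - q (z, y) * Real.log (qY y)) := by
    intro z y
    have hqp : 0 < q (z, y) := hq _
    have hb : 0 < qZ z * p z y := mul_pos (hqZpos z) (hp z y)
    have hlog : q (z, y) * Real.log (q (z, y) / (qZ z * qY y))
        - (q (z, y) * Real.log (p z y) - q (z, y) * Real.log (qY y))
        = q (z, y) * Real.log (q (z, y) / (qZ z * p z y)) := by
      rw [Real.log_div hqp.ne' (mul_pos (hqZpos z) (hqYpos y)).ne',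
          Real.log_div hqp.ne' hb.ne',
          Real.log_mul (hqZpos z).ne' (hqYpos y).ne',
          Real.log_mul (hqZpos z).ne' (hp z y).ne']
      ring
    rw [hlog]
    have h1 : Real.log (qZ z * p z y / q (z, y)) ≤ qZ z * p z y / q (z, y) - 1 :=
      Real.log_le_sub_one_of_pos (div_pos hb hqp)
    rw [Real.log_div hb.ne' hqp.ne'] at h1
    have h2 : 1 - qZ z * p z y / q (z, y) ≤ Real.log (q (z, y) / (qZ z * p z y)) := by
      rw [Real.log_div hqp.ne' hb.ne']; linarith
    have h3 := mul_le_mul_of_nonneg_left h2 hqp.le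
    have h4 : q (z, y) * (1 - qZ z * p z y / q (z, y)) = q (z, y) - qZ z * p z y := by
      field_simp
    linarith
  have main := Finset.sum_le_sum (fun z (_ : z ∈ Finset.univ) =>
    Finset.sum_le_sum (fun y (_ : y ∈ Finset.univ) => key z y))
  have hsum1 : ∑ z, ∑ y, q (z, y) = 1 := by
    rw [← Fintype.sum_prod_type]; exact hq1
  have hsum2 : ∑ z, ∑ y, qZ z * p z y = 1 := by
    have h : ∀ z, ∑ y, qZ z * p z y = qZ z := fun z => by
      rw [← Finset.mul_sum, hp1, mul_one]
    calc ∑ z, ∑ y, qZ z * p z y = ∑ z, qZ z := by simp_rw [h]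
      _ = ∑ z, ∑ y, q (z, y) := by simp_rw [hqZ]
      _ = 1 := hsum1
  have hC : ∑ z, ∑ y, q (z, y) * Real.log (qY y) = ∑ y, qY y * Real.log (qY y) := by
    rw [Finset.sum_comm]
    refine Finset.sum_congr rfl fun y _ => ?_
    rw [← Finset.sum_mul, ← hqY]
  simp only [Finset.sum_sub_distrib, Finset.sum_add_distrib] at main
  rw [hsum1, hsum2, hC] at main
  linarith
end

section
/- Let (α, 𝓐) be a measurable space, Q a measure on α, f : α → ℝ a measurable nonnegative function, and let P = Q.withDensity (fun z => ENNReal.ofReal (f z)). Let ε ≥ 0 and δ ≥ 0. If P {z | f z > Real.exp ε} ≤ ENNReal.ofReal δ, then for every measurable set S ⊆ α, P S ≤ ENNReal.ofReal (Real.exp ε) * Q S + ENNReal.ofReal δ. -/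
open MeasureTheory

/-- If, with `P = Q.withDensity f`, the likelihood ratio `f` exceeds `e^ε` with `P`-probability
at most `δ`, then `P S ≤ e^ε · Q S + δ` for every measurable `S`
(the `(ε, δ)`-differential privacy inequality). -/
theorem dp_of_likelihood_ratio_bound {α : Type*} [MeasurableSpace α] (Q : Measure α)
    (f : α → ℝ) (hf : Measurable f) (hf0 : ∀ z, 0 ≤ f z) (P : Measure α)
    (hP : P = Q.withDensity fun z => ENNReal.ofReal (f z))
    (ε δ : ℝ) (hε : 0 ≤ ε) (hδ : 0 ≤ δ)
    (h : P {z | Real.exp ε < f z} ≤ ENNReal.ofReal δ) :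
    ∀ S : Set α, MeasurableSet S →
      P S ≤ ENNReal.ofReal (Real.exp ε) * Q S + ENNReal.ofReal δ := by
  intro S hS
  set A : Set α := {z | Real.exp ε < f z} with hA
  have hAmeas : MeasurableSet A := measurableSet_lt measurable_const hf
  have hsplit : P S ≤ P (S \ A) + P A := by
    calc P S ≤ P ((S \ A) ∪ A) := measure_mono (fun x hx => by
            by_cases hxA : x ∈ A
            · exact Or.inr hxA
            · exact Or.inl ⟨hx, hxA⟩)
      _ ≤ P (S \ A) + P A := measure_union_le _ _
  have h1 : P (S \ A) ≤ ENNReal.ofReal (Real.exp ε) * Q S := by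
    rw [hP, withDensity_apply _ (hS.diff hAmeas)]
    calc ∫⁻ z in S \ A, ENNReal.ofReal (f z) ∂Q
        ≤ ∫⁻ _ in S \ A, ENNReal.ofReal (Real.exp ε) ∂Q := by
          refine setLIntegral_mono (by measurability) (fun z hz => ?_)
          exact ENNReal.ofReal_le_ofReal (not_lt.mp hz.2)
      _ = ENNReal.ofReal (Real.exp ε) * Q (S \ A) := by
          rw [setLIntegral_const]
      _ ≤ ENNReal.ofReal (Real.exp ε) * Q S :=
          mul_le_mul_right (measure_mono Set.diff_subset) _
  exact hsplit.trans (add_le_add h1 h)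
end
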